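/- arXiv:2405.13990 — 8 statements merged into one kernel-verified Lean document; each statement's English description precedes it below -/
import Mathlib

section
/- For every real θ, the complex-valued integral of (1 − exp(i·θ·u))·exp(−u)/u with respect to Lebesgue measure over u ∈ (0, ∞) equals (1/2)·log(1 + θ²) − i·arctan(θ). -/
open MeasureTheory Real Complex Set Filter

-- deriv of exp(I*θ*u) in θ (real)
lemma exp_I_mul_hasDerivAt (u : ℝ) (θ : ℝ) :
    HasDerivAt (fun θ : ℝ => Complex.exp (Complex.I * θ * u))
      (Complex.I * u * Complex.exp (Complex.I * θ * u)) θ := by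
  have h : HasDerivAt (fun z : ℂ => Complex.exp (Complex.I * z * u))
      (Complex.I * u * Complex.exp (Complex.I * θ * u)) (θ : ℂ) := by
    have h1 : HasDerivAt (fun z : ℂ => Complex.I * z * u) (Complex.I * u) (θ : ℂ) := by
      simpa using ((hasDerivAt_id (θ:ℂ)).const_mul Complex.I).mul_const (u : ℂ)
    simpa [mul_comm] using h1.cexp
  exact h.comp_ofReal

-- Lipschitz bound
lemma one_sub_exp_I_mul_norm_le (x : ℝ) : ‖1 - Complex.exp (Complex.I * x)‖ ≤ |x| := by
  have key : ∀ t : ℝ, HasDerivAt (fun s : ℝ => Complex.exp (Complex.I * s))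
      (Complex.I * Complex.exp (Complex.I * t)) t := by
    intro t
    have h1 : HasDerivAt (fun z : ℂ => Complex.exp (Complex.I * z))
        (Complex.I * Complex.exp (Complex.I * t)) (t : ℂ) := by
      simpa [mul_comm] using ((hasDerivAt_id (t:ℂ)).const_mul Complex.I).cexp
    exact h1.comp_ofReal
  have lip : LipschitzWith 1 (fun s : ℝ => Complex.exp (Complex.I * s)) := by
    have := (convex_univ (E := ℝ) (𝕜 := ℝ)).lipschitzOnWith_of_nnnorm_hasDerivWithin_le
      (f := fun s : ℝ => Complex.exp (Complex.I * s))
      (f' := fun t : ℝ => Complex.I * Complex.exp (Complex.I * t)) (C := 1)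
      (fun t _ => (key t).hasDerivWithinAt) (fun t _ => by
        rw [← NNReal.coe_le_coe]; simp [Complex.norm_exp])
    rwa [lipschitzOnWith_univ] at this
  have := lip.dist_le_mul x 0
  simpa [dist_eq_norm, norm_sub_rev] using this

lemma exp_c_integrableOn (θ : ℝ) :
    IntegrableOn (fun u : ℝ => Complex.exp ((Complex.I * θ - 1) * u)) (Ioi 0) := by
  have hb : IntegrableOn (fun u : ℝ => Real.exp (-u)) (Ioi (0:ℝ)) := by
    simpa using exp_neg_integrableOn_Ioi 0 one_pos
  refine hb.integrable.mono ?_ ?_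
  · exact (Complex.continuous_exp.comp (by continuity)).aestronglyMeasurable
  · filter_upwards with u
    simp only [Complex.norm_exp]
    have : ((Complex.I * θ - 1) * u).re = -u := by
      simp [Complex.sub_re, Complex.mul_re]
    rw [this]
    simp [Real.norm_eq_abs, _root_.abs_of_nonneg (Real.exp_pos _).le]

lemma integral_exp_c (θ : ℝ) :
    ∫ u in Ioi (0:ℝ), Complex.exp ((Complex.I * θ - 1) * u) = 1 / (1 - Complex.I * θ) := by
  set c : ℂ := Complex.I * θ - 1 with hc
  have hc0 : c ≠ 0 := by
    intro h
    have := congrArg Complex.re h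
    simp [hc, Complex.mul_re] at this
  have hderiv : ∀ x ∈ Ioi (0:ℝ), HasDerivAt (fun u : ℝ => Complex.exp (c * u) / c)
      (Complex.exp (c * x)) x := by
    intro x _
    have h1 : HasDerivAt (fun z : ℂ => Complex.exp (c * z) / c) (Complex.exp (c * x)) (x : ℂ) := by
      have := (((hasDerivAt_id (x:ℂ)).const_mul c).cexp).div_const c
      simpa [mul_comm, mul_div_assoc, mul_div_cancel_left₀ _ hc0] using this
    exact h1.comp_ofReal
  have htend : Tendsto (fun u : ℝ => Complex.exp (c * u) / c) atTop (nhds 0) := by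
    rw [tendsto_zero_iff_norm_tendsto_zero]
    have : (fun u : ℝ => ‖Complex.exp (c * u) / c‖) = fun u => Real.exp (-u) * ‖(c⁻¹ : ℂ)‖ := by
      funext u
      rw [norm_div, Complex.norm_exp]
      have : (c * u).re = -u := by simp [hc, Complex.sub_re, Complex.mul_re]
      rw [this]
      simp [div_eq_mul_inv, norm_inv]
    rw [this]
    simpa using (Real.tendsto_exp_neg_atTop_nhds_zero.mul_const ‖(c⁻¹ : ℂ)‖)
  have hcont : ContinuousWithinAt (fun u : ℝ => Complex.exp (c * u) / c) (Ici 0) 0 :=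
    ((Complex.continuous_exp.comp (by continuity)).div_const c).continuousWithinAt
  have := integral_Ioi_of_hasDerivAt_of_tendsto hcont hderiv (exp_c_integrableOn θ) htend
  rw [this]
  simp only [Complex.ofReal_zero, mul_zero, Complex.exp_zero]
  rw [zero_sub]
  have h1 : (1 : ℂ) - Complex.I * θ = -c := by rw [hc]; ring
  rw [h1]
  simp [div_neg]

noncomputable def Fint (θ : ℝ) : ℂ :=
  ∫ u in Ioi (0:ℝ), (1 - Complex.exp (Complex.I * θ * u)) * Complex.exp (-(u : ℂ)) / (u : ℂ)

lemma F_meas (θ : ℝ) : AEStronglyMeasurable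
    (fun u : ℝ => (1 - Complex.exp (Complex.I * θ * u)) * Complex.exp (-(u : ℂ)) / (u : ℂ))
    (volume.restrict (Ioi 0)) := by
  apply ContinuousOn.aestronglyMeasurable _ measurableSet_Ioi
  apply ContinuousOn.div
  · exact ((continuous_const.sub (Complex.continuous_exp.comp (by continuity))).mul
      (Complex.continuous_exp.comp (by continuity))).continuousOn
  · exact Complex.continuous_ofReal.continuousOn
  · intro u hu
    exact_mod_cast ne_of_gt (mem_Ioi.mp hu)

lemma F_norm_le (θ : ℝ) {u : ℝ} (hu : u ∈ Ioi (0:ℝ)) :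
    ‖(1 - Complex.exp (Complex.I * θ * u)) * Complex.exp (-(u : ℂ)) / (u : ℂ)‖
      ≤ |θ| * Real.exp (-u) := by
  have hu0 : (0:ℝ) < u := hu
  rw [norm_div, norm_mul]
  have h1 : ‖1 - Complex.exp (Complex.I * θ * u)‖ ≤ |θ * u| := by
    have := one_sub_exp_I_mul_norm_le (θ * u)
    simpa [mul_assoc, Complex.ofReal_mul] using this
  have h2 : ‖Complex.exp (-(u:ℂ))‖ = Real.exp (-u) := by
    rw [Complex.norm_exp]
    norm_num
  have h3 : ‖(u:ℂ)‖ = u := by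
    simp [_root_.abs_of_pos hu0]
  rw [h2, h3, abs_mul, _root_.abs_of_pos hu0] at *
  rw [div_le_iff₀ hu0]
  calc ‖1 - Complex.exp (Complex.I * θ * u)‖ * Real.exp (-u)
      ≤ (|θ| * u) * Real.exp (-u) := by
        apply mul_le_mul_of_nonneg_right h1 (Real.exp_pos _).le
    _ = |θ| * Real.exp (-u) * u := by ring

lemma F_integrable (θ : ℝ) : IntegrableOn
    (fun u : ℝ => (1 - Complex.exp (Complex.I * θ * u)) * Complex.exp (-(u : ℂ)) / (u : ℂ))
    (Ioi 0) := by
  have he : IntegrableOn (fun u : ℝ => Real.exp (-u)) (Ioi (0:ℝ)) := by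
    have := exp_neg_integrableOn_Ioi (0:ℝ) one_pos
    simpa using this
  have hb : IntegrableOn (fun u : ℝ => |θ| * Real.exp (-u)) (Ioi (0:ℝ)) := he.const_mul _
  refine hb.integrable.mono (F_meas θ) ?_
  filter_upwards [ae_restrict_mem measurableSet_Ioi] with u hu
  refine (F_norm_le θ hu).trans ?_
  rw [Real.norm_eq_abs, abs_mul, _root_.abs_abs, _root_.abs_of_pos (Real.exp_pos (-u))]

lemma F_pointwise_deriv (u : ℝ) (hu : u ∈ Ioi (0:ℝ)) (x : ℝ) :
    HasDerivAt (fun θ : ℝ => (1 - Complex.exp (Complex.I * θ * u)) * Complex.exp (-(u : ℂ)) / (u : ℂ))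
      (-Complex.I * Complex.exp ((Complex.I * x - 1) * u)) x := by
  have hu0 : (u:ℂ) ≠ 0 := by exact_mod_cast ne_of_gt (mem_Ioi.mp hu)
  have h := (((exp_I_mul_hasDerivAt u x).const_sub 1).mul_const
    (Complex.exp (-(u:ℂ)))).div_const (u : ℂ)
  refine h.congr_deriv ?_
  rw [show ((Complex.I * x - 1) * (u:ℂ)) = Complex.I * x * u + (-(u:ℂ)) by ring,
    Complex.exp_add]
  field_simp

lemma Fint_hasDerivAt (θ₀ : ℝ) :
    HasDerivAt Fint (-Complex.I * (1 / (1 - Complex.I * θ₀))) θ₀ := by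
  have key := hasDerivAt_integral_of_dominated_loc_of_deriv_le (μ := volume.restrict (Ioi 0))
    (x₀ := θ₀)
    (F := fun (θ : ℝ) (u : ℝ) => (1 - Complex.exp (Complex.I * θ * u)) * Complex.exp (-(u : ℂ)) / (u : ℂ))
    (F' := fun (x : ℝ) (u : ℝ) => -Complex.I * Complex.exp ((Complex.I * x - 1) * u))
    (bound := fun u => Real.exp (-u)) (Metric.ball_mem_nhds θ₀ one_pos)
    (Eventually.of_forall fun x => F_meas x) (F_integrable θ₀)
    (by
      apply ContinuousOn.aestronglyMeasurable _ measurableSet_Ioi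
      exact (continuous_const.mul (Complex.continuous_exp.comp (by continuity))).continuousOn)
    (by
      filter_upwards [ae_restrict_mem measurableSet_Ioi] with u hu
      intro x _
      rw [norm_mul]
      have : ‖Complex.exp ((Complex.I * x - 1) * u)‖ = Real.exp (-u) := by
        rw [Complex.norm_exp]
        congr 1
        simp [Complex.sub_re, Complex.mul_re]
      simp [this])
    (by
      have he : IntegrableOn (fun u : ℝ => Real.exp (-u)) (Ioi (0:ℝ)) := by
        have := exp_neg_integrableOn_Ioi (0:ℝ) one_pos
        simpa using this
      exact he)
    (by
      filter_upwards [ae_restrict_mem measurableSet_Ioi] with u hu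
      intro x _
      exact F_pointwise_deriv u hu x)
  have h2 := key.2
  have h3 : ∫ u in Ioi (0:ℝ), -Complex.I * Complex.exp ((Complex.I * θ₀ - 1) * u)
      = -Complex.I * (1 / (1 - Complex.I * θ₀)) := by
    rw [integral_const_mul, integral_exp_c]
  rwa [h3] at h2

lemma rhs_hasDerivAt (θ : ℝ) :
    HasDerivAt (fun θ : ℝ => (((1 / 2) * Real.log (1 + θ ^ 2) : ℝ) : ℂ)
        - Complex.I * (Real.arctan θ : ℝ))
      (-Complex.I * (1 / (1 - Complex.I * θ))) θ := by
  have hpos : (0:ℝ) < 1 + θ ^ 2 := by positivity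
  have hlog : HasDerivAt (fun θ : ℝ => (1/2) * Real.log (1 + θ ^ 2)) (θ / (1 + θ ^ 2)) θ := by
    have h : HasDerivAt (fun θ : ℝ => 1 + θ ^ 2) (2 * θ) θ := by
      simpa using (hasDerivAt_pow 2 θ).const_add 1
    have := (h.log (ne_of_gt hpos)).const_mul (1/2 : ℝ)
    refine this.congr_deriv ?_
    ring
  have harctan := Real.hasDerivAt_arctan θ
  have h := (hlog.ofReal_comp).sub ((harctan.ofReal_comp).const_mul Complex.I)
  refine h.congr_deriv ?_
  have h1 : ((1:ℝ) + θ ^ 2 : ℂ) ≠ 0 := by exact_mod_cast ne_of_gt hpos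
  have h2 : (1:ℂ) - Complex.I * θ ≠ 0 := by
    intro h
    have := congrArg Complex.re h
    simp [Complex.sub_re, Complex.mul_re] at this
  push_cast
  field_simp
  have h3 : ((θ:ℂ) - Complex.I) * (1 - Complex.I * θ) = -Complex.I * (1 + (θ:ℂ)^2) := by
    linear_combination (θ:ℂ) * Complex.I_sq
  have h1' : (1:ℂ) + (θ:ℂ)^2 ≠ 0 := by push_cast at h1; exact h1
  rw [mul_comm (θ:ℂ) Complex.I, ← neg_div, div_eq_div_iff h1' h2]
  exact h3

theorem gamma_characteristic_exponent (θ : ℝ) :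
    ∫ u in Set.Ioi (0 : ℝ),
        (1 - Complex.exp (Complex.I * θ * u)) * Complex.exp (-(u : ℂ)) / (u : ℂ)
      = ((1 / 2) * Real.log (1 + θ ^ 2) : ℝ) - Complex.I * (Real.arctan θ : ℝ) := by
  set G : ℝ → ℂ := fun t =>
    (((1 / 2) * Real.log (1 + t ^ 2) : ℝ) : ℂ) - Complex.I * (Real.arctan t : ℝ) with hG
  have hD : ∀ t : ℝ, HasDerivAt (fun t => Fint t - G t) 0 t := fun t => by
    have h := (Fint_hasDerivAt t).sub (rhs_hasDerivAt t)
    rw [sub_self] at h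
    exact h
  have hconst := is_const_of_deriv_eq_zero (𝕜 := ℝ) (f := fun t => Fint t - G t)
    (fun t => (hD t).differentiableAt) (fun t => (hD t).deriv) θ 0
  have hF0 : Fint 0 = 0 := by
    unfold Fint
    have : ∀ u : ℝ, (1 - Complex.exp (Complex.I * (0:ℝ) * u)) * Complex.exp (-(u : ℂ)) / (u : ℂ) = 0 := by
      intro u; simp
    simp [this]
  have hG0 : G 0 = 0 := by simp only [hG]; norm_num
  rw [hF0, hG0] at hconst
  have : Fint θ = G θ := by rwa [sub_zero, sub_eq_zero] at hconst
  exact this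
end

section
/- For every real s > 0, the integral of ((1 − cos x)/x)·exp(−s·x) with respect to Lebesgue measure over x ∈ (0, ∞) equals (1/2)·log(1 + s^{−2}). -/
open MeasureTheory Real Set Filter

lemma damped_sin_integral (s t : ℝ) (hs : 0 < s) :
    ∫ x in Set.Ioi (0 : ℝ), Real.sin (t * x) * Real.exp (-s * x)
      = t / (s ^ 2 + t ^ 2) := by
  have hc : (0 : ℝ) < s ^ 2 + t ^ 2 := by positivity
  have hcne : s ^ 2 + t ^ 2 ≠ 0 := ne_of_gt hc
  set F : ℝ → ℝ := fun x =>
    -(Real.exp (-s * x) * (s * Real.sin (t * x) + t * Real.cos (t * x))) / (s ^ 2 + t ^ 2)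
    with hF
  have hderiv : ∀ x ∈ Set.Ici (0 : ℝ), HasDerivAt F (Real.sin (t * x) * Real.exp (-s * x)) x := by
    intro x _
    have he : HasDerivAt (fun x : ℝ => Real.exp (-s * x)) (Real.exp (-s * x) * (-s)) x := by
      simpa using (((hasDerivAt_id x).const_mul (-s)).exp)
    have hsin : HasDerivAt (fun x : ℝ => Real.sin (t * x)) (Real.cos (t * x) * t) x := by
      simpa using (((hasDerivAt_id x).const_mul t).sin)
    have hcos : HasDerivAt (fun x : ℝ => Real.cos (t * x)) (-Real.sin (t * x) * t) x := by
      simpa using (((hasDerivAt_id x).const_mul t).cos)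
    have h := (((he.mul ((hsin.const_mul s).add (hcos.const_mul t))).neg).div_const
      (s ^ 2 + t ^ 2))
    refine h.congr_deriv ?_
    simp only [Pi.add_apply]
    field_simp
    ring
  have hint : IntegrableOn (fun x => Real.sin (t * x) * Real.exp (-s * x)) (Set.Ioi (0 : ℝ)) := by
    refine (exp_neg_integrableOn_Ioi 0 hs).mono' ?_ ?_
    · exact ((Real.continuous_sin.comp (continuous_const.mul continuous_id)).mul
        (Real.continuous_exp.comp (continuous_const.mul continuous_id))).aestronglyMeasurable
    · filter_upwards with x
      rw [norm_mul, Real.norm_eq_abs, Real.norm_eq_abs, Real.abs_exp]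
      calc |Real.sin (t * x)| * Real.exp (-s * x)
          ≤ 1 * Real.exp (-s * x) :=
            mul_le_mul_of_nonneg_right (Real.abs_sin_le_one _) (Real.exp_pos _).le
        _ = Real.exp (-s * x) := one_mul _
  have htend : Tendsto F atTop (nhds 0) := by
    apply squeeze_zero_norm (a := fun x => (s + |t|) / (s ^ 2 + t ^ 2) * Real.exp (-s * x))
    · intro x
      have hb : |s * Real.sin (t * x) + t * Real.cos (t * x)| ≤ s + |t| :=
        calc |s * Real.sin (t * x) + t * Real.cos (t * x)|
            ≤ |s * Real.sin (t * x)| + |t * Real.cos (t * x)| := abs_add_le _ _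
          _ ≤ s * 1 + |t| * 1 := by
              rw [abs_mul, abs_mul, abs_of_pos hs]
              exact add_le_add (mul_le_mul_of_nonneg_left (Real.abs_sin_le_one _) hs.le)
                (mul_le_mul_of_nonneg_left (Real.abs_cos_le_one _) (abs_nonneg _))
          _ = s + |t| := by ring
      calc ‖F x‖
          = Real.exp (-s * x) * |s * Real.sin (t * x) + t * Real.cos (t * x)| / (s ^ 2 + t ^ 2) := by
            rw [hF]
            rw [Real.norm_eq_abs, abs_div, abs_neg, abs_mul, Real.abs_exp, abs_of_pos hc]
        _ ≤ Real.exp (-s * x) * (s + |t|) / (s ^ 2 + t ^ 2) := by gcongr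
        _ = (s + |t|) / (s ^ 2 + t ^ 2) * Real.exp (-s * x) := by ring
    · have h0 : Tendsto (fun x : ℝ => Real.exp (-s * x)) atTop (nhds 0) := by
        have := Real.tendsto_exp_neg_atTop_nhds_zero.comp
          (tendsto_id.const_mul_atTop hs (f := fun x : ℝ => x))
        exact this.congr (fun x => by simp [Function.comp])
      simpa using h0.const_mul ((s + |t|) / (s ^ 2 + t ^ 2))
  have := MeasureTheory.integral_Ioi_of_hasDerivAt_of_tendsto'
    (fun x hx => hderiv x hx) hint htend
  rw [this, hF]
  simp [Real.exp_zero]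
  field_simp

theorem damped_cosine_integral (s : ℝ) (hs : 0 < s) :
    ∫ x in Set.Ioi (0 : ℝ), ((1 - Real.cos x) / x) * Real.exp (-s * x)
      = (1 / 2) * Real.log (1 + (s ^ 2)⁻¹) := by
  -- Step 1: rewrite integrand as inner integral over t ∈ (0,1]
  have hrepr : ∀ x ∈ Set.Ioi (0 : ℝ),
      ((1 - Real.cos x) / x) * Real.exp (-s * x)
        = ∫ t in Set.Ioc (0 : ℝ) 1, Real.sin (t * x) * Real.exp (-s * x) := by
    intro x hx
    have hxne : x ≠ 0 := ne_of_gt hx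
    rw [MeasureTheory.integral_mul_const, ← intervalIntegral.integral_of_le (zero_le_one)]
    congr 1
    have h2 : ∫ t in (0:ℝ)..1, Real.sin (t * x) = x⁻¹ • ∫ u in (0:ℝ)*x..1*x, Real.sin u :=
      intervalIntegral.integral_comp_mul_right Real.sin hxne
    rw [h2, integral_sin]
    simp [smul_eq_mul]
    field_simp
  rw [MeasureTheory.setIntegral_congr_fun measurableSet_Ioi hrepr]
  -- Step 2: Fubini
  have hprod : Integrable (Function.uncurry fun t x => Real.sin (t * x) * Real.exp (-s * x))
      ((volume.restrict (Set.Ioc (0:ℝ) 1)).prod (volume.restrict (Set.Ioi (0:ℝ)))) := by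
    have hg : Integrable (fun p : ℝ × ℝ => (1 : ℝ) * Real.exp (-s * p.2))
        ((volume.restrict (Set.Ioc (0:ℝ) 1)).prod (volume.restrict (Set.Ioi (0:ℝ)))) := by
      apply Integrable.mul_prod (f := fun _ : ℝ => (1:ℝ)) (g := fun x => Real.exp (-s * x))
      · exact integrableOn_const (by simp [Real.volume_Ioc])
      · exact exp_neg_integrableOn_Ioi 0 hs
    refine hg.mono' ?_ ?_
    · exact ((Real.continuous_sin.comp (continuous_fst.mul continuous_snd)).mul
        (Real.continuous_exp.comp (continuous_const.mul continuous_snd))).aestronglyMeasurable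
    · filter_upwards with p
      rw [Function.uncurry]
      simp only [Real.norm_eq_abs, abs_mul, Real.abs_exp, one_mul]
      exact (mul_le_mul_of_nonneg_right (Real.abs_sin_le_one _) (Real.exp_pos _).le).trans_eq
        (one_mul _)
  have hswap := MeasureTheory.integral_integral_swap hprod
  rw [← hswap]
  -- Step 3: inner integral
  have hinner : ∀ t : ℝ, (∫ x in Set.Ioi (0:ℝ), Real.sin (t * x) * Real.exp (-s * x))
      = t / (s ^ 2 + t ^ 2) := fun t => damped_sin_integral s t hs
  simp_rw [hinner]
  -- Step 4: final t-integral
  rw [← intervalIntegral.integral_of_le (zero_le_one)]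
  have hderiv : ∀ u ∈ Set.uIcc (0:ℝ) 1,
      HasDerivAt (fun u => (1/2) * Real.log (s ^ 2 + u ^ 2)) (u / (s ^ 2 + u ^ 2)) u := by
    intro u _
    have hne : s ^ 2 + u ^ 2 ≠ 0 := by positivity
    have h := (((hasDerivAt_pow 2 u).const_add (s ^ 2)).log hne).const_mul (1/2 : ℝ)
    refine h.congr_deriv ?_
    field_simp
    norm_num
  have hcont : Continuous (fun u : ℝ => u / (s ^ 2 + u ^ 2)) := by
    apply continuous_id.div (by continuity)
    intro u; positivity
  rw [intervalIntegral.integral_eq_sub_of_hasDerivAt hderiv (hcont.intervalIntegrable 0 1)]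
  have h1 : (1 : ℝ) + (s ^ 2)⁻¹ = (s ^ 2 + 1) / s ^ 2 := by
    field_simp
  rw [h1, Real.log_div (by positivity) (by positivity)]
  simp
  ring
end

section
/- For every real θ, the integral over x ∈ (0, ∞) of (1 − exp(−θ²·x²))·exp(−x)/x with respect to Lebesgue measure equals (1/2) times the integral over z ∈ ℝ of log(1 + 2·θ²·z²) against the standard Gaussian density (1/√(2π))·exp(−z²/2). -/
open MeasureTheory Real Filter Set

lemma one_sub_cos_le_abs (u : ℝ) : 1 - Real.cos u ≤ |u| := by
  have h := Real.cos_two_mul (u / 2)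
  have h2 : 2 * (u / 2) = u := by ring
  rw [h2] at h
  have h3 := Real.sin_sq_add_cos_sq (u / 2)
  have h4 : |Real.sin (u / 2)| ≤ |u / 2| := Real.abs_sin_le_abs
  have h5 : |Real.sin (u / 2)| ≤ 1 := abs_le.mpr ⟨Real.neg_one_le_sin _, Real.sin_le_one _⟩
  have h6 : Real.sin (u / 2) ^ 2 = |Real.sin (u / 2)| ^ 2 := (sq_abs _).symm
  have h7 : |u / 2| = |u| / 2 := by rw [abs_div]; norm_num
  nlinarith [abs_nonneg (Real.sin (u / 2))]

lemma one_sub_cos_nonneg (u : ℝ) : 0 ≤ 1 - Real.cos u := by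
  nlinarith [Real.cos_le_one u]

lemma integral_cos_mul_gaussian (b : ℝ) :
    ∫ z : ℝ, Real.cos (b * z) * Real.exp (-z ^ 2 / 2)
      = Real.sqrt (2 * π) * Real.exp (-b ^ 2 / 2) := by
  have key := fourierIntegral_gaussian (b := (1/2 : ℂ)) (by norm_num) (b : ℂ)
  have hint : Integrable (fun x : ℝ => Complex.exp (Complex.I * b * x) *
      Complex.exp (-(1/2 : ℂ) * x ^ 2)) := by
    have h := integrable_cexp_quadratic (b := (1/2 : ℂ)) (by norm_num) (Complex.I * b) 0
    refine h.congr (Filter.Eventually.of_forall fun x => ?_)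
    show Complex.exp _ = _
    dsimp only
    rw [← Complex.exp_add]
    congr 1
    ring
  have hre : ∀ x : ℝ, (Complex.exp (Complex.I * b * x) *
      Complex.exp (-(1/2 : ℂ) * x ^ 2)).re = Real.cos (b * x) * Real.exp (-x ^ 2 / 2) := by
    intro x
    have h1 : Complex.exp (Complex.I * b * x) * Complex.exp (-(1/2 : ℂ) * x ^ 2)
        = ((Real.exp (-x ^ 2 / 2) * Real.cos (b * x) : ℝ) : ℂ)
          + ((Real.exp (-x ^ 2 / 2) * Real.sin (b * x) : ℝ) : ℂ) * Complex.I := by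
      have e1 : Complex.I * b * x = ((b * x : ℝ) : ℂ) * Complex.I := by push_cast; ring
      have e2 : -(1/2 : ℂ) * (x : ℂ) ^ 2 = ((-x ^ 2 / 2 : ℝ) : ℂ) := by push_cast; ring
      rw [e1, e2, Complex.exp_mul_I, ← Complex.ofReal_exp, ← Complex.ofReal_cos,
        ← Complex.ofReal_sin]
      push_cast
      ring
    rw [h1]
    simp only [Complex.add_re, Complex.mul_re, Complex.ofReal_re, Complex.ofReal_im,
      Complex.I_re, Complex.I_im]
    ring
  have hL : (∫ x : ℝ, Complex.exp (Complex.I * b * x) *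
      Complex.exp (-(1/2 : ℂ) * x ^ 2)).re
      = ∫ x : ℝ, Real.cos (b * x) * Real.exp (-x ^ 2 / 2) := by
    have : (∫ x : ℝ, Complex.exp (Complex.I * b * x) * Complex.exp (-(1/2 : ℂ) * x ^ 2)).re
        = Complex.reCLM (∫ x : ℝ, Complex.exp (Complex.I * b * x)
            * Complex.exp (-(1/2 : ℂ) * x ^ 2)) := rfl
    rw [this, ← Complex.reCLM.integral_comp_comm hint]
    exact integral_congr_ae (Filter.Eventually.of_forall hre)
  have hR : ((π / (1/2 : ℂ)) ^ (1 / 2 : ℂ) * Complex.exp (-(b : ℂ) ^ 2 / (4 * (1/2 : ℂ)))).re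
      = Real.sqrt (2 * π) * Real.exp (-b ^ 2 / 2) := by
    have h1 : (π / (1/2 : ℂ)) = ((2 * π : ℝ) : ℂ) := by push_cast; ring
    have h2 : -(b : ℂ) ^ 2 / (4 * (1/2 : ℂ)) = ((-b ^ 2 / 2 : ℝ) : ℂ) := by push_cast; ring
    have h3 : ((2 * π : ℝ) : ℂ) ^ (1 / 2 : ℂ) = ((Real.sqrt (2 * π) : ℝ) : ℂ) := by
      rw [Real.sqrt_eq_rpow, Complex.ofReal_cpow (by positivity)]
      norm_num
    rw [h1, h2, h3, ← Complex.ofReal_exp, ← Complex.ofReal_mul, Complex.ofReal_re]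
  rw [← hL, key, hR]

lemma integrableOn_sin_mul_exp (s : ℝ) :
    IntegrableOn (fun x : ℝ => Real.sin (s * x) * Real.exp (-x)) (Set.Ioi 0) := by
  have he : IntegrableOn (fun x : ℝ => Real.exp (-x)) (Set.Ioi 0) := by
    simpa using exp_neg_integrableOn_Ioi 0 one_pos
  refine he.mono' ?_ ?_
  · exact (Continuous.mul (Real.continuous_sin.comp (continuous_const.mul continuous_id))
      (Real.continuous_exp.comp continuous_neg)).aestronglyMeasurable
  · refine Filter.Eventually.of_forall fun x => ?_
    rw [norm_mul, Real.norm_eq_abs, Real.norm_eq_abs, Real.abs_exp]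
    nlinarith [abs_le.mp (abs_le.mpr ⟨Real.neg_one_le_sin (s*x), Real.sin_le_one (s*x)⟩),
      Real.exp_pos (-x), abs_le.mpr ⟨Real.neg_one_le_sin (s*x), Real.sin_le_one (s*x)⟩,
      abs_nonneg (Real.sin (s*x))]

lemma integral_sin_mul_exp (s : ℝ) :
    ∫ x in Set.Ioi (0:ℝ), Real.sin (s * x) * Real.exp (-x) = s / (1 + s ^ 2) := by
  have hs2 : (0:ℝ) < 1 + s ^ 2 := by positivity
  set F : ℝ → ℝ := fun x =>
    -(Real.exp (-x) * (Real.sin (s * x) + s * Real.cos (s * x))) / (1 + s ^ 2) with hF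
  have hderiv : ∀ x ∈ Set.Ici (0:ℝ), HasDerivAt F (Real.sin (s * x) * Real.exp (-x)) x := by
    intro x _
    have h1 : HasDerivAt (fun x : ℝ => Real.exp (-x)) (-Real.exp (-x)) x := by
      simpa using (hasDerivAt_neg x).exp
    have h2 : HasDerivAt (fun x : ℝ => Real.sin (s * x)) (Real.cos (s * x) * s) x :=
      (Real.hasDerivAt_sin (s * x)).comp x (by simpa using (hasDerivAt_id x).const_mul s)
    have h3 : HasDerivAt (fun x : ℝ => Real.cos (s * x)) (-Real.sin (s * x) * s) x :=
      (Real.hasDerivAt_cos (s * x)).comp x (by simpa using (hasDerivAt_id x).const_mul s)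
    have := ((h1.mul (h2.add (h3.const_mul s))).neg).div_const (1 + s ^ 2)
    refine this.congr_deriv ?_
    rw [Pi.add_apply]
    field_simp
    ring
  have htends : Tendsto F atTop (nhds 0) := by
    have hb : ∀ x : ℝ, ‖F x‖ ≤ (1 + |s|) / (1 + s ^ 2) * Real.exp (-x) := by
      intro x
      rw [hF]
      rw [norm_div, norm_neg, norm_mul, Real.norm_eq_abs, Real.norm_eq_abs, Real.norm_eq_abs,
        Real.abs_exp, abs_of_pos hs2]
      rw [div_le_iff₀ hs2]
      rw [show (1 + |s|) / (1 + s ^ 2) * Real.exp (-x) * (1 + s ^ 2)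
        = (1 + |s|) * Real.exp (-x) by field_simp]
      have : |Real.sin (s * x) + s * Real.cos (s * x)| ≤ 1 + |s| := by
        refine (abs_add_le _ _).trans ?_
        have h1 : |Real.sin (s * x)| ≤ 1 :=
          abs_le.mpr ⟨Real.neg_one_le_sin _, Real.sin_le_one _⟩
        have h2 : |s * Real.cos (s * x)| ≤ |s| := by
          rw [abs_mul]
          nlinarith [abs_le.mpr ⟨Real.neg_one_le_cos (s*x), Real.cos_le_one (s*x)⟩,
            abs_nonneg s, abs_nonneg (Real.cos (s*x))]
        linarith
      calc Real.exp (-x) * |Real.sin (s * x) + s * Real.cos (s * x)|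
          ≤ Real.exp (-x) * (1 + |s|) := by
            exact mul_le_mul_of_nonneg_left this (Real.exp_pos _).le
        _ = (1 + |s|) * Real.exp (-x) := by ring
    refine squeeze_zero_norm hb ?_
    have := Real.tendsto_exp_neg_atTop_nhds_zero.const_mul ((1 + |s|) / (1 + s ^ 2))
    simpa using this
  have hcont : ContinuousWithinAt F (Set.Ici 0) 0 :=
    (hderiv 0 Set.self_mem_Ici).continuousAt.continuousWithinAt
  have := integral_Ioi_of_hasDerivAt_of_tendsto hcont
    (fun x hx => hderiv x (Set.mem_Ici.mpr (le_of_lt hx)))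
    (integrableOn_sin_mul_exp s) htends
  rw [this, hF]
  simp
  ring

lemma integral_self_div_one_add_sq (c : ℝ) :
    ∫ s in (0:ℝ)..c, s / (1 + s ^ 2) = Real.log (1 + c ^ 2) / 2 := by
  have hderiv : ∀ s : ℝ, HasDerivAt (fun s : ℝ => Real.log (1 + s ^ 2) / 2)
      (s / (1 + s ^ 2)) s := by
    intro s
    have h0 : (0:ℝ) < 1 + s ^ 2 := by positivity
    have h1 : HasDerivAt (fun s : ℝ => 1 + s ^ 2) (2 * s) s := by
      simpa using ((hasDerivAt_pow 2 s).const_add 1)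
    have := (h1.log h0.ne').div_const 2
    refine this.congr_deriv ?_
    field_simp
  have hcont : Continuous (fun s : ℝ => s / (1 + s ^ 2)) := by
    refine continuous_id.div (by continuity) fun s => by positivity
  rw [intervalIntegral.integral_eq_sub_of_hasDerivAt (fun s _ => hderiv s)
    (hcont.intervalIntegrable 0 c)]
  simp

lemma integral_one_sub_cos_aux {c : ℝ} (hc : 0 ≤ c) :
    ∫ x in Set.Ioi (0:ℝ), (1 - Real.cos (c * x)) * Real.exp (-x) / x
      = Real.log (1 + c ^ 2) / 2 := by
  have he : IntegrableOn (fun x : ℝ => Real.exp (-x)) (Set.Ioi 0) := by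
    simpa using exp_neg_integrableOn_Ioi 0 one_pos
  have hprod : Integrable (Function.uncurry fun x s => Real.sin (s * x) * Real.exp (-x))
      ((volume.restrict (Set.Ioi 0)).prod (volume.restrict (Set.Ioc 0 c))) := by
    have hg : Integrable (fun p : ℝ × ℝ => Real.exp (-p.1) * 1)
        ((volume.restrict (Set.Ioi 0)).prod (volume.restrict (Set.Ioc 0 c))) := by
      exact Integrable.mul_prod he (integrableOn_const measure_Ioc_lt_top.ne)
    refine hg.mono' ?_ ?_
    · refine Continuous.aestronglyMeasurable ?_
      exact (Real.continuous_sin.comp (continuous_snd.mul continuous_fst)).mul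
        (Real.continuous_exp.comp continuous_fst.neg)
    · refine Filter.Eventually.of_forall fun p => ?_
      simp only [Function.uncurry, norm_mul, Real.norm_eq_abs, Real.abs_exp, mul_one]
      nlinarith [abs_le.mpr ⟨Real.neg_one_le_sin (p.2 * p.1), Real.sin_le_one (p.2 * p.1)⟩,
        Real.exp_pos (-p.1), abs_nonneg (Real.sin (p.2 * p.1))]
  have swap := integral_integral_swap hprod
  have hL : ∫ x in Set.Ioi (0:ℝ), ∫ s in Set.Ioc (0:ℝ) c, Real.sin (s * x) * Real.exp (-x)
      = ∫ x in Set.Ioi (0:ℝ), (1 - Real.cos (c * x)) * Real.exp (-x) / x := by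
    refine setIntegral_congr_fun measurableSet_Ioi fun x hx => ?_
    have hx0 : (0:ℝ) < x := hx
    rw [← intervalIntegral.integral_of_le hc, intervalIntegral.integral_mul_const]
    have : ∫ s in (0:ℝ)..c, Real.sin (s * x) = (1 - Real.cos (c * x)) / x := by
      rw [intervalIntegral.integral_comp_mul_right Real.sin hx0.ne']
      simp [integral_sin, smul_eq_mul]
      field_simp
    rw [this]
    ring
  have hR : ∫ s in Set.Ioc (0:ℝ) c, ∫ x in Set.Ioi (0:ℝ), Real.sin (s * x) * Real.exp (-x)
      = Real.log (1 + c ^ 2) / 2 := by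
    rw [← integral_self_div_one_add_sq c, ← intervalIntegral.integral_of_le hc]
    refine intervalIntegral.integral_congr fun s _ => ?_
    exact integral_sin_mul_exp s
  rw [← hL, swap, hR]

lemma integral_one_sub_cos (c : ℝ) :
    ∫ x in Set.Ioi (0:ℝ), (1 - Real.cos (c * x)) * Real.exp (-x) / x
      = Real.log (1 + c ^ 2) / 2 := by
  rcases le_or_gt 0 c with h | h
  · exact integral_one_sub_cos_aux h
  · have := integral_one_sub_cos_aux (c := -c) (by linarith)
    simpa [Real.cos_neg, neg_mul] using this

lemma gaussian_integrable : Integrable (fun z : ℝ => Real.exp (-z ^ 2 / 2)) := by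
  have h : (fun z : ℝ => Real.exp (-z ^ 2 / 2)) = fun z : ℝ => Real.exp (-(1/2) * z ^ 2) := by
    funext z; congr 1; ring
  rw [h]
  exact integrable_exp_neg_mul_sq (by norm_num)

lemma cos_gaussian_integrable (b : ℝ) :
    Integrable (fun z : ℝ => Real.cos (b * z) * Real.exp (-z ^ 2 / 2)) := by
  refine gaussian_integrable.mono' ?_ ?_
  · exact ((Real.continuous_cos.comp (continuous_const.mul continuous_id)).mul
      (by continuity)).aestronglyMeasurable
  · refine Filter.Eventually.of_forall fun z => ?_
    rw [norm_mul, Real.norm_eq_abs, Real.norm_eq_abs, Real.abs_exp]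
    nlinarith [abs_le.mpr ⟨Real.neg_one_le_cos (b*z), Real.cos_le_one (b*z)⟩,
      Real.exp_pos (-z^2/2), abs_nonneg (Real.cos (b*z))]

lemma integral_one_sub_cos_gaussian (b : ℝ) :
    ∫ z : ℝ, (1 - Real.cos (b * z)) * ((1 / Real.sqrt (2 * π)) * Real.exp (-z ^ 2 / 2))
      = 1 - Real.exp (-b ^ 2 / 2) := by
  have hsqrt : (0:ℝ) < Real.sqrt (2 * π) := Real.sqrt_pos.mpr (by positivity)
  have h0 : ∫ z : ℝ, Real.exp (-z ^ 2 / 2) = Real.sqrt (2 * π) := by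
    have := integral_cos_mul_gaussian 0
    simpa using this
  have heq : ∀ z : ℝ, (1 - Real.cos (b * z)) * ((1 / Real.sqrt (2 * π)) * Real.exp (-z ^ 2 / 2))
      = (1 / Real.sqrt (2 * π)) * Real.exp (-z ^ 2 / 2)
        - (1 / Real.sqrt (2 * π)) * (Real.cos (b * z) * Real.exp (-z ^ 2 / 2)) := by
    intro z; ring
  rw [integral_congr_ae (Filter.Eventually.of_forall heq),
    integral_sub (gaussian_integrable.const_mul _) ((cos_gaussian_integrable b).const_mul _),
    integral_const_mul, integral_const_mul, h0, integral_cos_mul_gaussian b]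
  field_simp

theorem gamma_quadratic_variation_modular (θ : ℝ) :
    ∫ x in Set.Ioi (0 : ℝ), (1 - Real.exp (-θ ^ 2 * x ^ 2)) * Real.exp (-x) / x
      = (1 / 2) * ∫ z : ℝ,
          Real.log (1 + 2 * θ ^ 2 * z ^ 2) *
            ((1 / Real.sqrt (2 * Real.pi)) * Real.exp (-z ^ 2 / 2)) := by
  set a : ℝ := Real.sqrt 2 * θ with ha
  have ha2 : a ^ 2 = 2 * θ ^ 2 := by
    rw [ha, mul_pow, Real.sq_sqrt (by norm_num : (0:ℝ) ≤ 2)]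
  set φ : ℝ → ℝ := fun z => (1 / Real.sqrt (2 * π)) * Real.exp (-z ^ 2 / 2) with hφ
  set f : ℝ → ℝ → ℝ := fun x z => ((1 - Real.cos (a * x * z)) * φ z) * (Real.exp (-x) / x)
    with hf
  -- Step 1: rewrite LHS as iterated integral
  have step1 : ∫ x in Set.Ioi (0 : ℝ), (1 - Real.exp (-θ ^ 2 * x ^ 2)) * Real.exp (-x) / x
      = ∫ x in Set.Ioi (0:ℝ), ∫ z : ℝ, f x z := by
    refine setIntegral_congr_fun measurableSet_Ioi fun x hx => ?_
    have h1 : ∫ z : ℝ, f x z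
        = (∫ z : ℝ, (1 - Real.cos (a * x * z)) * φ z) * (Real.exp (-x) / x) :=
      integral_mul_const _ _
    have h2 : ∫ z : ℝ, (1 - Real.cos (a * x * z)) * φ z
        = 1 - Real.exp (-θ ^ 2 * x ^ 2) := by
      have := integral_one_sub_cos_gaussian (a * x)
      rw [hφ]
      simp only [mul_assoc] at this ⊢
      rw [this]
      congr 1
      rw [mul_pow, ha2]
      ring
    rw [h1, h2]
    ring
  -- Step 2: integrability on the product space
  have hprod : Integrable (Function.uncurry f)
      ((volume.restrict (Set.Ioi 0)).prod volume) := by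
    have hg : Integrable (fun p : ℝ × ℝ => (|a| * Real.exp (-p.1)) * (|p.2| * φ p.2))
        ((volume.restrict (Set.Ioi 0)).prod volume) := by
      have he : IntegrableOn (fun x : ℝ => Real.exp (-x)) (Set.Ioi 0) := by
        simpa using exp_neg_integrableOn_Ioi 0 one_pos
      have hz : Integrable (fun z : ℝ => |z| * φ z) := by
        have h : (fun z : ℝ => z * Real.exp (-z ^ 2 / 2))
            = fun z : ℝ => z * Real.exp (-(1/2) * z ^ 2) := by
          funext z; congr 2; ring
        have h1 : Integrable (fun z : ℝ => z * Real.exp (-z ^ 2 / 2)) := by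
          rw [h]; exact integrable_mul_exp_neg_mul_sq (by norm_num)
        have h2 : Integrable (fun z : ℝ => |z| * Real.exp (-z ^ 2 / 2)) := by
          have := h1.abs
          refine this.congr (Filter.Eventually.of_forall fun z => ?_)
          dsimp only
          rw [abs_mul, Real.abs_exp]
        have h3 : (fun z : ℝ => |z| * φ z)
            = fun z : ℝ => (1 / Real.sqrt (2 * π)) * (|z| * Real.exp (-z ^ 2 / 2)) := by
          funext z; rw [hφ]; ring
        rw [h3]
        exact h2.const_mul _
      exact Integrable.mul_prod (L := ℝ) (he.const_mul _) hz
    refine hg.mono' ?_ ?_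
    · refine Measurable.aestronglyMeasurable ?_
      have mφ : Measurable φ := by
        rw [hφ]
        exact (continuous_const.mul (Real.continuous_exp.comp (by continuity))).measurable
      exact ((measurable_const.sub (Real.measurable_cos.comp
          (((measurable_const.mul measurable_fst).mul measurable_snd)))).mul
          (mφ.comp measurable_snd)).mul
          ((Real.measurable_exp.comp measurable_fst.neg).div measurable_fst)
    · rw [Measure.restrict_prod_eq_prod_univ]
      refine Filter.eventually_of_mem
        (ae_restrict_mem (measurableSet_Ioi.prod MeasurableSet.univ)) fun p hp => ?_
      obtain ⟨hp1, -⟩ := hp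
      have hx : (0:ℝ) < p.1 := hp1
      have hφpos : 0 ≤ φ p.2 := by
        rw [hφ]
        positivity
      have hcos : 0 ≤ 1 - Real.cos (a * p.1 * p.2) := by
        nlinarith [Real.cos_le_one (a * p.1 * p.2)]
      have hb : 1 - Real.cos (a * p.1 * p.2) ≤ |a| * p.1 * |p.2| := by
        have := one_sub_cos_le_abs (a * p.1 * p.2)
        calc 1 - Real.cos (a * p.1 * p.2) ≤ |a * p.1 * p.2| := this
          _ = |a| * p.1 * |p.2| := by rw [abs_mul, abs_mul, abs_of_pos hx]
      rw [Real.norm_eq_abs]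
      simp only [hf, Function.uncurry]
      have hfx : 0 ≤ ((1 - Real.cos (a * p.1 * p.2)) * φ p.2) * (Real.exp (-p.1) / p.1) := by
        positivity
      rw [abs_of_nonneg hfx]
      calc ((1 - Real.cos (a * p.1 * p.2)) * φ p.2) * (Real.exp (-p.1) / p.1)
          ≤ ((|a| * p.1 * |p.2|) * φ p.2) * (Real.exp (-p.1) / p.1) := by
            apply mul_le_mul_of_nonneg_right _ (by positivity)
            exact mul_le_mul_of_nonneg_right hb hφpos
        _ = (|a| * Real.exp (-p.1)) * (|p.2| * φ p.2) := by
            field_simp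
  have swap := integral_integral_swap hprod
  -- Step 3: inner integral in x
  have step3 : ∫ z : ℝ, ∫ x in Set.Ioi (0:ℝ), f x z
      = ∫ z : ℝ, (Real.log (1 + 2 * θ ^ 2 * z ^ 2) / 2) * φ z := by
    refine integral_congr_ae (Filter.Eventually.of_forall fun z => ?_)
    dsimp only
    have h1 : ∫ x in Set.Ioi (0:ℝ), f x z
        = (∫ x in Set.Ioi (0:ℝ), (1 - Real.cos ((a * z) * x)) * Real.exp (-x) / x) * φ z := by
      rw [← integral_mul_const]
      refine setIntegral_congr_fun measurableSet_Ioi fun x hx => ?_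
      simp only [hf]
      rw [show a * x * z = a * z * x by ring]
      ring
    rw [h1, integral_one_sub_cos (a * z), mul_pow, ha2]
  rw [step1, swap, step3]
  have hfin : ∫ z : ℝ, (Real.log (1 + 2 * θ ^ 2 * z ^ 2) / 2) * φ z
      = ∫ z : ℝ, (1/2) * (Real.log (1 + 2 * θ ^ 2 * z ^ 2) * φ z) :=
    integral_congr_ae (Filter.Eventually.of_forall fun z => by ring)
  rw [hfin, integral_const_mul]
end

section
/- Let (X, 𝒜, λ) be a σ-finite measure space, let f : X → ℝ be measurable with ∫_X log(1 + |f(x)|) dλ(x) < ∞, and let β ∈ [−1, 1] with β ≠ 0. Suppose ν is a Borel probability measure on ℝ whose characteristic function satisfies, for every real θ, ∫_ℝ exp(i·θ·y) dν(y) = exp( −(1/2)·∫_X log(1 + θ²·f(x)²) dλ(x) + i·β·∫_X arctan(θ·f(x)) dλ(x) ). Then for every ε with 0 < ε ≤ 1/2, ν({y ∈ ℝ : |y| > ε}) ≤ (3/ε)·∫_X log(1 + |f(x)|) dλ(x). -/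
open MeasureTheory Real Complex

private lemma arctan_le_log_aux (v : ℝ) (hv : 0 ≤ v) :
    Real.arctan v ≤ (8/5) * Real.log (1 + v) := by
  set g : ℝ → ℝ := fun x => (8/5) * Real.log (1 + x) - Real.arctan x with hg
  have hder : ∀ x : ℝ, 0 ≤ x →
      HasDerivAt g ((8/5) * (1 + x)⁻¹ - 1 / (1 + x ^ 2)) x := by
    intro x hx
    have h1 : HasDerivAt (fun x : ℝ => Real.log (1 + x)) ((1 + x)⁻¹) x := by
      have := (Real.hasDerivAt_log (by linarith : (1:ℝ) + x ≠ 0)).comp x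
        ((hasDerivAt_id x).const_add 1)
      simpa [Function.comp_def] using this
    exact ((h1.const_mul (8/5)).sub (Real.hasDerivAt_arctan x))
  have hmono : MonotoneOn g (Set.Ici (0:ℝ)) := by
    apply monotoneOn_of_deriv_nonneg (convex_Ici 0)
    · intro x hx
      exact (hder x hx).continuousAt.continuousWithinAt
    · intro x hx
      rw [interior_Ici, Set.mem_Ioi] at hx
      exact (hder x hx.le).differentiableAt.differentiableWithinAt
    · intro x hx
      rw [interior_Ici, Set.mem_Ioi] at hx
      rw [(hder x hx.le).deriv]
      have h2 : (0:ℝ) < 1 + x := by linarith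
      have h3 : (0:ℝ) < 1 + x ^ 2 := by positivity
      have heq : (8/5 : ℝ) * (1+x)⁻¹ = 8 / (5*(1+x)) := by field_simp
      rw [sub_nonneg, heq, div_le_div_iff₀ h3 (by linarith)]
      nlinarith [sq_nonneg (x - 5/16)]
  have h0 : g 0 ≤ g v := hmono Set.self_mem_Ici hv hv
  simp [hg] at h0
  linarith

private lemma log_mul_le_aux (t u : ℝ) (ht : 0 ≤ t) (hu : 0 ≤ u) :
    Real.log (1 + t * u) ≤ max 1 t * Real.log (1 + u) := by
  rcases le_total t 1 with h | h
  · rw [max_eq_left h, one_mul]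
    apply Real.log_le_log (by nlinarith)
    nlinarith
  · rw [max_eq_right h]
    have hb : 1 + t * u ≤ (1 + u) ^ t := one_add_mul_self_le_rpow_one_add (by linarith) h
    calc Real.log (1 + t * u) ≤ Real.log ((1 + u) ^ t) :=
          Real.log_le_log (by nlinarith) hb
      _ = t * Real.log (1 + u) := Real.log_rpow (by linarith) t

private lemma log_sq_le_aux (θ u : ℝ) :
    Real.log (1 + θ ^ 2 * u ^ 2) ≤ 2 * max 1 |θ| * Real.log (1 + |u|) := by
  have h0 : (0:ℝ) ≤ |θ| * |u| := mul_nonneg (abs_nonneg _) (abs_nonneg _)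
  have h1 : 1 + θ ^ 2 * u ^ 2 ≤ (1 + |θ| * |u|) ^ 2 := by
    have : θ ^ 2 * u ^ 2 = (|θ| * |u|) ^ 2 := by
      rw [mul_pow, _root_.sq_abs, _root_.sq_abs]
    nlinarith
  calc Real.log (1 + θ ^ 2 * u ^ 2) ≤ Real.log ((1 + |θ| * |u|) ^ 2) :=
        Real.log_le_log (by nlinarith) h1
    _ = 2 * Real.log (1 + |θ| * |u|) := by
        rw [show ((1:ℝ) + |θ| * |u|) ^ 2 = (1 + |θ| * |u|) ^ (2:ℕ) by norm_num,
          Real.log_pow]; norm_num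
    _ ≤ 2 * (max 1 |θ| * Real.log (1 + |u|)) := by
        have := log_mul_le_aux |θ| |u| (abs_nonneg _) (abs_nonneg _)
        linarith
    _ = 2 * max 1 |θ| * Real.log (1 + |u|) := by ring

private lemma abs_arctan_le_aux (θ u : ℝ) :
    |Real.arctan (θ * u)| ≤ (8/5) * max 1 |θ| * Real.log (1 + |u|) := by
  have habs : |Real.arctan (θ * u)| = Real.arctan |θ * u| := by
    rcases le_or_gt 0 (θ * u) with h | h
    · rw [_root_.abs_of_nonneg h, _root_.abs_of_nonneg]
      have : Real.arctan 0 ≤ Real.arctan (θ * u) := Real.arctan_strictMono.monotone h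
      simpa using this
    · have hneg : Real.arctan (θ * u) < 0 := by
        have : Real.arctan (θ * u) < Real.arctan 0 := Real.arctan_strictMono h
        simpa using this
      rw [_root_.abs_of_neg h, _root_.abs_of_neg hneg, Real.arctan_neg]
  rw [habs, abs_mul]
  calc Real.arctan (|θ| * |u|) ≤ (8/5) * Real.log (1 + |θ| * |u|) :=
        arctan_le_log_aux _ (mul_nonneg (abs_nonneg _) (abs_nonneg _))
    _ ≤ (8/5) * (max 1 |θ| * Real.log (1 + |u|)) := by
        have := log_mul_le_aux |θ| |u| (abs_nonneg _) (abs_nonneg _)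
        linarith
    _ = (8/5) * max 1 |θ| * Real.log (1 + |u|) := by ring

private lemma sin_le_linear_aux (t : ℝ) (ht : 13/5 ≤ t) : Real.sin t ≤ (21/100) * t := by
  have hπ : π < 3.1416 := Real.pi_lt_d4
  have hπ3 : 3 < π := Real.pi_gt_three
  rcases le_total t π with h | h
  · rw [← Real.sin_pi_sub t]
    calc Real.sin (π - t) ≤ π - t := Real.sin_le (by linarith)
      _ ≤ 3.1416 - 13/5 := by linarith
      _ ≤ (21/100) * (13/5) := by norm_num
      _ ≤ (21/100) * t := by nlinarith
  · rcases le_total t (2*π) with h2 | h2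
    · have heq : Real.sin t = -Real.sin (t - π) := by
        rw [Real.sin_sub_pi]; ring
      rw [heq]
      have : 0 ≤ Real.sin (t - π) :=
        Real.sin_nonneg_of_nonneg_of_le_pi (by linarith) (by linarith)
      nlinarith
    · calc Real.sin t ≤ 1 := Real.sin_le_one t
        _ ≤ (21/100) * (2*π) := by nlinarith
        _ ≤ (21/100) * t := by nlinarith

private lemma arith_final_aux (ε Φ P : ℝ) (hε0 : 0 < ε) (hε : ε ≤ 1/2) (hΦ : 0 ≤ Φ)
    (hΦε : Φ ≤ ε/3) (hP : 0 ≤ P)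
    (key : 2 * (13/(5*ε)) * (79/100) * P
      ≤ Φ * ((13/(5*ε))^2 + 1) + (64/75) * Φ^2 * ((13/(5*ε))^3 + 2)) :
    P ≤ (3/ε) * Φ := by
  have h1 : (0:ℝ) < 13/(5*ε) := by positivity
  have hr : Φ * ((13/(5*ε))^2 + 1) + (64/75) * Φ^2 * ((13/(5*ε))^3 + 2)
      ≤ (3/ε) * Φ * (2 * (13/(5*ε)) * (79/100)) := by
    rw [div_pow, div_pow]
    have hε3 : (0:ℝ) < ε^3 := by positivity
    rw [← sub_nonneg]
    have expand : (3/ε) * Φ * (2 * (13/(5*ε)) * (79/100))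
        - (Φ * ((13^2/(5*ε)^2) + 1) + (64/75) * Φ^2 * ((13^3/(5*ε)^3) + 2))
        = (Φ / ε^3) * ((3081/250) * ε - (169/25) * ε - ε^3
            - (140608/9375) * Φ - (128/75) * Φ * ε^3) := by
      field_simp
      ring
    rw [expand]
    apply mul_nonneg (by positivity)
    have hcube : ε^3 ≤ ε/4 := by nlinarith
    have h8 : ε^3 ≤ 1/8 := by nlinarith
    have hA : (140608/9375) * Φ ≤ (140608/28125) * ε := by linarith
    have hB : Φ * ε^3 ≤ ε/24 := by nlinarith
    linarith
  have := key.trans hr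
  have h2 : (0:ℝ) < 2 * (13/(5*ε)) * (79/100) := by positivity
  exact le_of_mul_le_mul_right (by linarith [this]) h2

private lemma charFun_re_aux (ν : Measure ℝ) [IsProbabilityMeasure ν] (θ a b : ℝ)
    (hchar : ∫ y, Complex.exp (Complex.I * θ * y) ∂ν
      = Complex.exp (-(a:ℝ) + Complex.I * ((b : ℝ) : ℂ))) :
    ∫ y, Real.cos (θ * y) ∂ν = Real.exp (-a) * Real.cos b := by
  have hcont : Continuous fun y : ℝ => Complex.exp (Complex.I * θ * y) := by
    fun_prop
  have hint : Integrable (fun y : ℝ => Complex.exp (Complex.I * θ * y)) ν := by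
    apply Integrable.mono' (integrable_const (1:ℝ)) hcont.aestronglyMeasurable
    filter_upwards with y
    rw [Complex.norm_exp]
    have : (Complex.I * θ * y).re = 0 := by simp
    simp [this]
  have hre := congrArg Complex.re hchar
  rw [show (∫ (y : ℝ), Complex.exp (Complex.I * θ * y) ∂ν).re
      = RCLike.re (∫ (y : ℝ), Complex.exp (Complex.I * θ * y) ∂ν) from rfl,
    ← integral_re hint] at hre
  have hL : ∀ y : ℝ, (Complex.exp (Complex.I * θ * y)).re = Real.cos (θ * y) := by
    intro y
    rw [show Complex.I * θ * y = ((θ * y : ℝ) : ℂ) * Complex.I by push_cast; ring,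
      Complex.exp_ofReal_mul_I_re]
  have hR : (Complex.exp (-(a:ℝ) + Complex.I * ((b : ℝ) : ℂ))).re
      = Real.exp (-a) * Real.cos b := by
    rw [Complex.exp_re]
    simp
  simp only [RCLike.re_to_complex] at hre
  rw [hR] at hre
  rw [← hre]
  congr 1
  ext y
  exact (hL y).symm

private lemma kernel_val_aux (r y : ℝ) (hr : 0 < r) (hy : y ≠ 0) :
    ∫ θ in Set.Ioc (-r) r, (1 - Real.cos (θ * y)) ∂(volume : Measure ℝ)
      = 2*r - 2*Real.sin (r*y)/y := by
  rw [← intervalIntegral.integral_of_le (by linarith : -r ≤ r)]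
  have hc : Continuous fun θ : ℝ => Real.cos (θ * y) := by fun_prop
  rw [intervalIntegral.integral_sub intervalIntegrable_const (hc.intervalIntegrable _ _)]
  rw [intervalIntegral.integral_const]
  have heq : (fun θ : ℝ => Real.cos (θ * y)) = fun θ : ℝ => Real.cos (y * θ) := by
    ext θ; ring_nf
  rw [heq]
  rw [intervalIntegral.integral_comp_mul_left Real.cos hy]
  rw [integral_cos]
  rw [show y * -r = -(y*r) by ring, Real.sin_neg]
  rw [smul_eq_mul]
  field_simp
  ring_nf
  field_simp

set_option maxHeartbeats 2000000 in
theorem chebyshev_tail_compound_gamma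
    {X : Type*} [MeasurableSpace X] (lam : Measure X) [SigmaFinite lam]
    (f : X → ℝ) (hf : Measurable f)
    (hf_int : Integrable (fun x => Real.log (1 + |f x|)) lam)
    (β : ℝ) (hβ : β ∈ Set.Icc (-1 : ℝ) 1) (hβ0 : β ≠ 0)
    (ν : Measure ℝ) [IsProbabilityMeasure ν]
    (hchar : ∀ θ : ℝ,
      ∫ y, Complex.exp (Complex.I * θ * y) ∂ν
        = Complex.exp
            (-((1 / 2 : ℝ) * ∫ x, Real.log (1 + θ ^ 2 * (f x) ^ 2) ∂lam : ℝ)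
              + Complex.I * ((β * ∫ x, Real.arctan (θ * f x) ∂lam : ℝ) : ℂ)))
    (ε : ℝ) (hε0 : 0 < ε) (hε : ε ≤ 1 / 2) :
    (ν {y : ℝ | ε < |y|}).toReal
      ≤ (3 / ε) * ∫ x, Real.log (1 + |f x|) ∂lam := by
  have hβ1 : |β| ≤ 1 := abs_le.2 ⟨hβ.1, hβ.2⟩
  set Φ := ∫ x, Real.log (1 + |f x|) ∂lam with hΦdef
  have hΦ0 : 0 ≤ Φ :=
    integral_nonneg fun x => Real.log_nonneg (by linarith [abs_nonneg (f x)])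
  set T := {y : ℝ | ε < |y|} with hTdef
  have hT : MeasurableSet T := measurableSet_lt measurable_const measurable_abs
  set P := (ν T).toReal with hPdef
  have hP0 : 0 ≤ P := ENNReal.toReal_nonneg
  have hP1 : P ≤ 1 := by
    rw [hPdef]
    calc (ν T).toReal ≤ (1 : ENNReal).toReal :=
          ENNReal.toReal_mono (by simp) prob_le_one
      _ = 1 := by simp
  rcases le_or_gt (ε/3) Φ with hcase | hcase
  · have h1 : (1:ℝ) ≤ (3/ε) * Φ := by
      rw [div_mul_eq_mul_div, le_div_iff₀ hε0]
      linarith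
    linarith
  · -- main case : Φ < ε/3
    set r := 13/(5*ε) with hrdef
    have hr0 : 0 < r := by positivity
    have hr1 : 1 ≤ r := by
      rw [hrdef, le_div_iff₀ (by linarith)]
      linarith
    set μr := (volume : Measure ℝ).restrict (Set.Ioc (-r) r) with hμrdef
    have hfinμr : IsFiniteMeasure μr := by
      constructor
      rw [hμrdef, Measure.restrict_apply_univ, Real.volume_Ioc]
      exact ENNReal.ofReal_lt_top
    set F : ℝ → ℝ → ℝ := fun θ y => 1 - Real.cos (θ * y) with hFdef
    have hFcont : Continuous (Function.uncurry F) := by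
      have : Continuous fun p : ℝ × ℝ => 1 - Real.cos (p.1 * p.2) := by fun_prop
      exact this
    have hFint : Integrable (Function.uncurry F) (μr.prod ν) := by
      apply Integrable.mono' (integrable_const (2:ℝ)) hFcont.aestronglyMeasurable
      filter_upwards with p
      rw [Real.norm_eq_abs, abs_le]
      have h1 := Real.cos_le_one (p.1 * p.2)
      have h2 := Real.neg_one_le_cos (p.1 * p.2)
      constructor <;> simp only [Function.uncurry, hFdef] <;> linarith
    have hIntθ : Integrable (fun θ => ∫ y, F θ y ∂ν) μr := hFint.integral_prod_left
    have hIy : Integrable (fun y => ∫ θ, F θ y ∂μr) ν := hFint.integral_prod_right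
    have hswap : ∫ θ, (∫ y, F θ y ∂ν) ∂μr = ∫ y, (∫ θ, F θ y ∂μr) ∂ν :=
      integral_integral_swap hFint
    -- lower bound on the kernel integral
    have hker : ∀ y ∈ T, 2*r*(79/100) ≤ ∫ θ, F θ y ∂μr := by
      intro y hy
      have hεy : ε < |y| := hy
      have hy0 : y ≠ 0 := by
        intro h
        rw [h] at hεy
        simp at hεy
        linarith
      have hval : ∫ θ, F θ y ∂μr = 2*r - 2*Real.sin (r*y)/y := by
        rw [hμrdef]
        exact kernel_val_aux r y hr0 hy0
      rw [hval]
      have habs : 0 < |y| := abs_pos.2 hy0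
      have ht : 13/5 ≤ r * |y| := by
        have h1 : r * ε ≤ r * |y| := by nlinarith
        have h2 : r * ε = 13/5 := by
          rw [hrdef]; field_simp
        linarith
      have hs := sin_le_linear_aux (r*|y|) ht
      have hsy : Real.sin (r*y)/y = Real.sin (r*|y|)/|y| := by
        rcases abs_cases y with ⟨h1,_⟩ | ⟨h1,_⟩
        · rw [h1]
        · rw [h1, show r * -y = -(r*y) by ring, Real.sin_neg, neg_div_neg_eq]
      have hfin : Real.sin (r*y)/y ≤ (21/100)*r := by
        rw [hsy, div_le_iff₀ habs]
        calc Real.sin (r*|y|) ≤ (21/100)*(r*|y|) := hs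
          _ = (21/100)*r*|y| := by ring
      have hsplit : 2*Real.sin (r*y)/y = 2*(Real.sin (r*y)/y) := by ring
      rw [hsplit]
      linarith
    have hFynn : ∀ y, 0 ≤ ∫ θ, F θ y ∂μr := by
      intro y
      apply integral_nonneg
      intro θ
      simp only [hFdef, Pi.zero_apply, sub_nonneg]
      exact Real.cos_le_one _
    have hlow : 2*r*(79/100) * P ≤ ∫ y, (∫ θ, F θ y ∂μr) ∂ν := by
      have h1 : ∫ y in T, (∫ θ, F θ y ∂μr) ∂ν ≤ ∫ y, (∫ θ, F θ y ∂μr) ∂ν :=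
        setIntegral_le_integral hIy (ae_of_all _ hFynn)
      have h2 := setIntegral_ge_of_const_le hT (measure_ne_top ν T) hker hIy.integrableOn
      calc 2*r*(79/100) * P = (2*r*(79/100)) * (ν T).toReal := by rw [hPdef]
        _ ≤ ∫ y in T, (∫ θ, F θ y ∂μr) ∂ν := by rw [mul_comm]; exact h2
        _ ≤ ∫ y, (∫ θ, F θ y ∂μr) ∂ν := h1
    -- upper bound pointwise in θ
    have hup : ∀ θ : ℝ, ∫ y, F θ y ∂ν
        ≤ Φ * max 1 |θ| + (32/25) * Φ^2 * (max 1 |θ|)^2 := by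
      intro θ
      set c := max 1 |θ| with hcdef
      have hc1 : (1:ℝ) ≤ c := le_max_left _ _
      have hmeas1 : Measurable fun x => Real.log (1 + θ^2 * (f x)^2) := by
        apply Real.measurable_log.comp
        exact measurable_const.add (((hf.pow_const 2).const_mul (θ^2)))
      have hlog_nn : ∀ x, 0 ≤ Real.log (1 + θ^2*(f x)^2) := by
        intro x
        apply Real.log_nonneg
        nlinarith [sq_nonneg (θ * f x), sq_nonneg θ, sq_nonneg (f x), mul_pow θ (f x) 2]
      have hdom : Integrable (fun x => 2 * c * Real.log (1 + |f x|)) lam :=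
        hf_int.const_mul _
      have hint_log : Integrable (fun x => Real.log (1 + θ^2 * (f x)^2)) lam := by
        apply hdom.mono' hmeas1.aestronglyMeasurable
        filter_upwards with x
        rw [Real.norm_eq_abs, _root_.abs_of_nonneg (hlog_nn x)]
        exact log_sq_le_aux θ (f x)
      have ha_le : ∫ x, Real.log (1 + θ^2*(f x)^2) ∂lam ≤ 2*c*Φ := by
        calc ∫ x, Real.log (1 + θ^2*(f x)^2) ∂lam
            ≤ ∫ x, 2*c*Real.log (1+|f x|) ∂lam :=
              integral_mono hint_log hdom (fun x => log_sq_le_aux θ (f x))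
          _ = 2*c*Φ := by rw [integral_const_mul, hΦdef]
      have ha0 : 0 ≤ ∫ x, Real.log (1 + θ^2*(f x)^2) ∂lam := integral_nonneg hlog_nn
      have hmeas2 : Measurable fun x => Real.arctan (θ * f x) :=
        Real.measurable_arctan.comp (hf.const_mul θ)
      have hdom2 : Integrable (fun x => (8/5) * c * Real.log (1+|f x|)) lam :=
        hf_int.const_mul _
      have hint_at : Integrable (fun x => Real.arctan (θ * f x)) lam := by
        apply hdom2.mono' hmeas2.aestronglyMeasurable
        filter_upwards with x
        rw [Real.norm_eq_abs]
        exact abs_arctan_le_aux θ (f x)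
      have hb_le : |β * ∫ x, Real.arctan (θ * f x) ∂lam| ≤ (8/5)*c*Φ := by
        rw [abs_mul]
        have h1 := norm_integral_le_integral_norm (μ := lam)
          (f := fun x => Real.arctan (θ * f x))
        simp only [Real.norm_eq_abs] at h1
        have h2 : ∫ x, |Real.arctan (θ*f x)| ∂lam
            ≤ ∫ x, (8/5)*c*Real.log (1+|f x|) ∂lam :=
          integral_mono hint_at.abs hdom2 (fun x => abs_arctan_le_aux θ (f x))
        rw [integral_const_mul] at h2
        calc |β| * |∫ x, Real.arctan (θ * f x) ∂lam|
            ≤ 1 * ((8/5)*c*Φ) := by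
              apply mul_le_mul hβ1 _ (abs_nonneg _) zero_le_one
              rw [hΦdef]
              linarith
          _ = (8/5)*c*Φ := one_mul _
      set a : ℝ := (1/2 : ℝ) * ∫ x, Real.log (1 + θ^2*(f x)^2) ∂lam with hadef
      set b : ℝ := β * ∫ x, Real.arctan (θ * f x) ∂lam with hbdef
      have hG : ∫ y, Real.cos (θ * y) ∂ν = Real.exp (-a) * Real.cos b :=
        charFun_re_aux ν θ a b (hchar θ)
      have hintcos : Integrable (fun y => Real.cos (θ * y)) ν := by
        apply Integrable.mono' (integrable_const (1:ℝ))
          (Continuous.aestronglyMeasurable (by fun_prop))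
        filter_upwards with y
        rw [Real.norm_eq_abs]
        exact Real.abs_cos_le_one _
      have hFval : ∫ y, F θ y ∂ν = 1 - Real.exp (-a) * Real.cos b := by
        simp only [hFdef]
        rw [integral_sub (integrable_const 1) hintcos, integral_const, probReal_univ]
        simp [hG]
      rw [hFval]
      have hA0 : 0 ≤ a := by rw [hadef]; linarith
      have hcos := Real.one_sub_sq_div_two_le_cos (x := b)
      have hexp1 : Real.exp (-a) ≤ 1 := by
        rw [show (1:ℝ) = Real.exp 0 by simp]
        exact Real.exp_le_exp.2 (by linarith)
      have hexp2 : 1 - a ≤ Real.exp (-a) := by linarith [Real.add_one_le_exp (-a)]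
      have h1cos : 0 ≤ 1 - Real.cos b := by linarith [Real.cos_le_one b]
      have hstep : 1 - Real.exp (-a) * Real.cos b ≤ a + b^2/2 := by
        have h4 : Real.exp (-a) * (1 - Real.cos b) ≤ 1 * (1 - Real.cos b) :=
          mul_le_mul_of_nonneg_right hexp1 h1cos
        nlinarith
      have ha : a ≤ c * Φ := by rw [hadef]; linarith
      have hb2 : b^2 ≤ ((8/5)*c*Φ)^2 := by
        rw [← _root_.sq_abs b]
        exact pow_le_pow_left₀ (abs_nonneg b) hb_le 2
      calc 1 - Real.exp (-a) * Real.cos b ≤ a + b^2/2 := hstep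
        _ ≤ c*Φ + ((8/5)*c*Φ)^2/2 := by linarith
        _ = Φ * c + (32/25) * Φ^2 * c^2 := by ring
    -- integrate the upper bound
    have hcontmax : Continuous fun θ : ℝ => max 1 |θ| :=
      continuous_const.max continuous_abs
    have hc1' : Continuous fun θ : ℝ => Φ * max 1 |θ| :=
      continuous_const.mul hcontmax
    have hc2' : Continuous fun θ : ℝ => (32/25) * Φ^2 * (max 1 |θ|)^2 :=
      continuous_const.mul (hcontmax.pow 2)
    have hi1 : Integrable (fun θ => Φ * max 1 |θ|) μr := by
      rw [hμrdef]
      exact hc1'.integrableOn_Ioc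
    have hi2 : Integrable (fun θ => (32/25) * Φ^2 * (max 1 |θ|)^2) μr := by
      rw [hμrdef]
      exact hc2'.integrableOn_Ioc
    have hRint : Integrable
        (fun θ => Φ * max 1 |θ| + (32/25) * Φ^2 * (max 1 |θ|)^2) μr :=
      hi1.add hi2
    have hmono2 : ∫ θ, (∫ y, F θ y ∂ν) ∂μr
        ≤ ∫ θ, (Φ * max 1 |θ| + (32/25) * Φ^2 * (max 1 |θ|)^2) ∂μr :=
      integral_mono hIntθ hRint hup
    -- compute the J integrals
    have hci1 : ∀ (u v : ℝ), IntervalIntegrable (fun θ : ℝ => max 1 |θ|) volume u v :=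
      fun u v => hcontmax.intervalIntegrable u v
    have hci2 : ∀ (u v : ℝ), IntervalIntegrable (fun θ : ℝ => (max 1 |θ|)^2) volume u v :=
      fun u v => (hcontmax.pow 2).intervalIntegrable u v
    have hJ1 : ∫ θ, max 1 |θ| ∂μr = r^2 + 1 := by
      rw [hμrdef, ← intervalIntegral.integral_of_le (by linarith : -r ≤ r)]
      rw [← intervalIntegral.integral_add_adjacent_intervals (a := -r) (b := -1) (c := r)
        (hci1 _ _) (hci1 _ _),
        ← intervalIntegral.integral_add_adjacent_intervals (a := -1) (b := 1) (c := r)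
        (hci1 _ _) (hci1 _ _)]
      have e1 : ∫ θ in (-r : ℝ)..(-1), max 1 |θ| = ∫ θ in (-r : ℝ)..(-1), -θ := by
        apply intervalIntegral.integral_congr
        intro θ hθ
        rw [Set.uIcc_of_le (by linarith : (-r:ℝ) ≤ -1)] at hθ
        show max 1 |θ| = -θ
        rw [_root_.abs_of_nonpos (by linarith [hθ.2]), max_eq_right (by linarith [hθ.2])]
      have e2 : ∫ θ in (-1 : ℝ)..1, max 1 |θ| = ∫ θ in (-1:ℝ)..1, (1:ℝ) := by
        apply intervalIntegral.integral_congr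
        intro θ hθ
        rw [Set.uIcc_of_le (by norm_num : (-1:ℝ) ≤ 1)] at hθ
        show max 1 |θ| = 1
        rw [max_eq_left (abs_le.2 ⟨hθ.1, hθ.2⟩)]
      have e3 : ∫ θ in (1 : ℝ)..r, max 1 |θ| = ∫ θ in (1:ℝ)..r, θ := by
        apply intervalIntegral.integral_congr
        intro θ hθ
        rw [Set.uIcc_of_le (by linarith : (1:ℝ) ≤ r)] at hθ
        show max 1 |θ| = θ
        rw [_root_.abs_of_nonneg (by linarith [hθ.1]), max_eq_right (by linarith [hθ.1])]
      rw [e1, e2, e3, intervalIntegral.integral_neg, integral_id,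
        intervalIntegral.integral_const, integral_id, smul_eq_mul]
      ring
    have hJ2 : ∫ θ, (max 1 |θ|)^2 ∂μr = (2*r^3 + 4)/3 := by
      rw [hμrdef, ← intervalIntegral.integral_of_le (by linarith : -r ≤ r)]
      rw [← intervalIntegral.integral_add_adjacent_intervals (a := -r) (b := -1) (c := r)
        (hci2 _ _) (hci2 _ _),
        ← intervalIntegral.integral_add_adjacent_intervals (a := -1) (b := 1) (c := r)
        (hci2 _ _) (hci2 _ _)]
      have e1 : ∫ θ in (-r : ℝ)..(-1), (max 1 |θ|)^2 = ∫ θ in (-r : ℝ)..(-1), θ^2 := by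
        apply intervalIntegral.integral_congr
        intro θ hθ
        rw [Set.uIcc_of_le (by linarith : (-r:ℝ) ≤ -1)] at hθ
        show (max 1 |θ|)^2 = θ^2
        rw [_root_.abs_of_nonpos (by linarith [hθ.2]), max_eq_right (by linarith [hθ.2])]
        ring
      have e2 : ∫ θ in (-1 : ℝ)..1, (max 1 |θ|)^2 = ∫ θ in (-1:ℝ)..1, (1:ℝ) := by
        apply intervalIntegral.integral_congr
        intro θ hθ
        rw [Set.uIcc_of_le (by norm_num : (-1:ℝ) ≤ 1)] at hθ
        show (max 1 |θ|)^2 = 1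
        rw [max_eq_left (abs_le.2 ⟨hθ.1, hθ.2⟩)]
        norm_num
      have e3 : ∫ θ in (1 : ℝ)..r, (max 1 |θ|)^2 = ∫ θ in (1:ℝ)..r, θ^2 := by
        apply intervalIntegral.integral_congr
        intro θ hθ
        rw [Set.uIcc_of_le (by linarith : (1:ℝ) ≤ r)] at hθ
        show (max 1 |θ|)^2 = θ^2
        rw [_root_.abs_of_nonneg (by linarith [hθ.1]), max_eq_right (by linarith [hθ.1])]
      rw [e1, e2, e3, integral_pow, intervalIntegral.integral_const, integral_pow,
        smul_eq_mul]
      ring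
    have hval : ∫ θ, (Φ * max 1 |θ| + (32/25) * Φ^2 * (max 1 |θ|)^2) ∂μr
        = Φ*(r^2+1) + (32/25)*Φ^2*((2*r^3+4)/3) := by
      rw [integral_add hi1 hi2, integral_const_mul, integral_const_mul, hJ1, hJ2]
    have key : 2*r*(79/100) * P ≤ Φ*(r^2+1) + (64/75)*Φ^2*(r^3+2) := by
      calc 2*r*(79/100) * P ≤ ∫ y, (∫ θ, F θ y ∂μr) ∂ν := hlow
        _ = ∫ θ, (∫ y, F θ y ∂ν) ∂μr := hswap.symm
        _ ≤ ∫ θ, (Φ * max 1 |θ| + (32/25) * Φ^2 * (max 1 |θ|)^2) ∂μr := hmono2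
        _ = Φ*(r^2+1) + (32/25)*Φ^2*((2*r^3+4)/3) := hval
        _ = Φ*(r^2+1) + (64/75)*Φ^2*(r^3+2) := by ring
    rw [hrdef] at key
    exact arith_final_aux ε Φ P hε0 hε hΦ0 hcase.le hP0 key
end

section
/- For every real t > 0 and every real θ < 1, the function x ↦ (1 + log x)·x^{θ·x}·t^x / Γ(x + 1) is Lebesgue integrable on (1, ∞), where Γ denotes the real Gamma function and powers are real powers. -/
open MeasureTheory Real

/-- Lower bound for Gamma via the floor factorial: for `x ≥ 4`,
`Γ(x+1) ≥ exp ((x-1) * (log (x-1) - 1))`. -/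
lemma gamma_hyperexp_aux_lb (x : ℝ) (hx : 4 ≤ x) :
    Real.exp ((x - 1) * (Real.log (x - 1) - 1)) ≤ Real.Gamma (x + 1) := by
  set n : ℕ := ⌊x⌋₊ with hn
  have hx0 : (0:ℝ) < x := by linarith
  have hnx : (n : ℝ) ≤ x := Nat.floor_le hx0.le
  have hxn : x < n + 1 := Nat.lt_floor_add_one x
  have hn4 : (4:ℝ) ≤ n := by
    have := Nat.le_floor (α := ℝ) (n := 4) (by exact_mod_cast hx)
    exact_mod_cast this
  -- Γ(x+1) ≥ Γ(n+1) = n!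
  have hmono : Real.Gamma ((n : ℝ) + 1) ≤ Real.Gamma (x + 1) := by
    rcases eq_or_lt_of_le hnx with h | h
    · rw [h]
    · exact le_of_lt (Real.Gamma_strictMonoOn_Ici (by simp; linarith) (by simp; linarith)
        (by linarith))
  have hfac : Real.Gamma ((n : ℝ) + 1) = (n.factorial : ℝ) := Real.Gamma_nat_eq_factorial n
  -- n! ≥ n^n / e^n
  have hfac_lb : Real.exp ((n : ℝ) * Real.log n - n) ≤ (n.factorial : ℝ) := by
    have h1 : (n : ℝ) ^ n / (n.factorial : ℝ) ≤ Real.exp n :=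
      Real.pow_div_factorial_le_exp (n : ℝ) (Nat.cast_nonneg n) n
    have hfp : (0:ℝ) < (n.factorial : ℝ) := by exact_mod_cast n.factorial_pos
    have h2 : (n : ℝ) ^ n ≤ Real.exp n * (n.factorial : ℝ) := by
      rw [div_le_iff₀ hfp] at h1; linarith [h1]
    have hnn : (0:ℝ) < (n:ℝ) := by linarith
    have h3 : (n : ℝ) ^ n = Real.exp ((n : ℝ) * Real.log n) := by
      rw [← Real.rpow_natCast (n : ℝ) n, Real.rpow_def_of_pos hnn, mul_comm]
    rw [h3] at h2
    rw [Real.exp_sub, div_le_iff₀ (Real.exp_pos _)]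
    linarith [h2]
  -- n * log n - n ≥ (x-1) * (log (x-1) - 1)
  have hkey : (x - 1) * (Real.log (x - 1) - 1) ≤ (n : ℝ) * Real.log n - n := by
    have hx1 : (3:ℝ) ≤ x - 1 := by linarith
    have hxn' : x - 1 ≤ (n : ℝ) := by linarith
    have hlogmono : Real.log (x - 1) ≤ Real.log n := Real.log_le_log (by linarith) hxn'
    have hlog3 : (1:ℝ) ≤ Real.log (x - 1) := by
      have : Real.exp 1 ≤ x - 1 := by
        have := Real.exp_one_lt_d9
        linarith
      calc (1:ℝ) = Real.log (Real.exp 1) := (Real.log_exp 1).symm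
        _ ≤ Real.log (x - 1) := Real.log_le_log (Real.exp_pos 1) this
    have h1 : (x - 1) * (Real.log (x - 1) - 1) ≤ (n : ℝ) * (Real.log (x-1) - 1) := by
      apply mul_le_mul_of_nonneg_right hxn' (by linarith)
    have h2 : (n : ℝ) * (Real.log (x-1) - 1) ≤ (n : ℝ) * (Real.log n - 1) := by
      apply mul_le_mul_of_nonneg_left (by linarith) (by linarith)
    have : (n : ℝ) * (Real.log n - 1) = (n : ℝ) * Real.log n - n := by ring
    linarith
  calc Real.exp ((x - 1) * (Real.log (x - 1) - 1))
      ≤ Real.exp ((n : ℝ) * Real.log n - n) := Real.exp_le_exp.mpr hkey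
    _ ≤ (n.factorial : ℝ) := hfac_lb
    _ = Real.Gamma ((n : ℝ) + 1) := hfac.symm
    _ ≤ Real.Gamma (x + 1) := hmono

theorem inverse_gamma_hyperexp_integrable (t θ : ℝ) (ht : 0 < t) (hθ : θ < 1) :
    IntegrableOn
      (fun x : ℝ => (1 + Real.log x) * x ^ (θ * x) * t ^ x / Real.Gamma (x + 1))
      (Set.Ioi (1 : ℝ)) := by
  apply integrable_of_isBigO_exp_neg (b := 1) one_pos
  · -- continuity on [1, ∞)
    apply ContinuousOn.div
    · apply ContinuousOn.mul
      · apply ContinuousOn.mul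
        · refine continuousOn_const.add (Real.continuousOn_log.mono ?_)
          intro x hx
          simp only [Set.mem_Ici] at hx
          simp only [Set.mem_compl_iff, Set.mem_singleton_iff]
          intro h
          rw [h] at hx
          linarith
        · refine ContinuousOn.rpow continuousOn_id (continuousOn_const.mul continuousOn_id) ?_
          intro x hx
          simp only [Set.mem_Ici] at hx
          refine Or.inl ?_
          intro h
          rw [h] at hx
          linarith
      · exact ContinuousOn.rpow continuousOn_const continuousOn_id
          (fun x _ => Or.inl ht.ne')
    · intro x hx
      simp only [Set.mem_Ici] at hx
      apply ContinuousAt.continuousWithinAt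
      have hg : ContinuousAt Real.Gamma (x + 1) :=
        (Real.differentiableAt_Gamma (s := x + 1)
          (fun m => by
            intro h
            have : (0:ℝ) ≤ (m:ℝ) := m.cast_nonneg
            linarith)).continuousAt
      exact ContinuousAt.comp (g := Real.Gamma) (f := fun y : ℝ => y + 1) hg
        ((continuous_id.add continuous_const).continuousAt)
    · intro x hx
      simp only [Set.mem_Ici] at hx
      exact (Real.Gamma_pos_of_pos (by linarith)).ne'
  · -- f = O(exp(-x))
    rw [Asymptotics.isBigO_iff]
    refine ⟨1, ?_⟩
    have hc : Filter.Tendsto (fun x : ℝ => (1 - θ) * Real.log x) Filter.atTop Filter.atTop :=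
      Real.tendsto_log_atTop.const_mul_atTop (by linarith)
    filter_upwards [Filter.eventually_ge_atTop (4:ℝ),
      hc.eventually_ge_atTop (Real.log t + 4 + Real.log 2)] with x hx4 hct
    have hx0 : (0:ℝ) < x := by linarith
    have hΓpos : 0 < Real.Gamma (x + 1) := Real.Gamma_pos_of_pos (by linarith)
    have hlx : Real.log x ≤ x - 1 := Real.log_le_sub_one_of_pos hx0
    have hlx0 : 0 ≤ Real.log x := Real.log_nonneg (by linarith)
    set L := Real.log x with hL
    set M := Real.log (x - 1) with hM
    -- log (x-1) ≥ log x - log 2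
    have hM2 : L - Real.log 2 ≤ M := by
      have h1 : x / 2 ≤ x - 1 := by linarith
      have h2 : Real.log (x / 2) ≤ M := Real.log_le_log (by linarith) h1
      rw [Real.log_div (by linarith) (by norm_num)] at h2
      exact h2
    have hlog2 : (0:ℝ) < Real.log 2 := Real.log_pos (by norm_num)
    -- key exponent inequality (†)
    have hdag : L + θ * x * L + x * Real.log t + x ≤ (x - 1) * (M - 1) := by
      have hprod : (x - 1) * (L - Real.log 2) ≤ (x - 1) * (M - 1) + (x - 1) := by
        nlinarith [mul_le_mul_of_nonneg_left hM2 (by linarith : (0:ℝ) ≤ x - 1)]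
      have hcx : (Real.log t + 4 + Real.log 2) * x ≤ ((1 - θ) * L) * x :=
        mul_le_mul_of_nonneg_right hct (by linarith)
      nlinarith [hprod, hcx, hlx, hlx0, hlog2]
    -- assemble
    have hfx : (1 + L) * x ^ (θ * x) * t ^ x ≤ Real.exp (-(1 * x)) * Real.Gamma (x + 1) := by
      have e1 : x ^ (θ * x) = Real.exp (L * (θ * x)) := Real.rpow_def_of_pos hx0 _
      have e2 : t ^ x = Real.exp (Real.log t * x) := Real.rpow_def_of_pos ht _
      have e3 : (1 + L) ≤ Real.exp L := by
        have := Real.add_one_le_exp L; linarith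
      have e4 : (1 + L) * x ^ (θ * x) * t ^ x
          ≤ Real.exp (L + L * (θ * x) + Real.log t * x) := by
        rw [e1, e2]
        have h1p : (0:ℝ) < 1 + L := by linarith
        calc (1 + L) * Real.exp (L * (θ * x)) * Real.exp (Real.log t * x)
            ≤ Real.exp L * Real.exp (L * (θ * x)) * Real.exp (Real.log t * x) := by
              apply mul_le_mul_of_nonneg_right
                (mul_le_mul_of_nonneg_right e3 (Real.exp_pos _).le) (Real.exp_pos _).le
          _ = Real.exp (L + L * (θ * x) + Real.log t * x) := by
              rw [← Real.exp_add, ← Real.exp_add]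
      have e5 : Real.exp (L + L * (θ * x) + Real.log t * x)
          ≤ Real.exp (-(1 * x)) * Real.Gamma (x + 1) := by
        have hg := gamma_hyperexp_aux_lb x hx4
        calc Real.exp (L + L * (θ * x) + Real.log t * x)
            ≤ Real.exp (-(1 * x)) * Real.exp ((x - 1) * (M - 1)) := by
              rw [← Real.exp_add]
              apply Real.exp_le_exp.mpr
              nlinarith [hdag]
          _ ≤ Real.exp (-(1 * x)) * Real.Gamma (x + 1) := by
              exact mul_le_mul_of_nonneg_left hg (Real.exp_pos _).le
      exact e4.trans e5
    have hpos : 0 < (1 + L) * x ^ (θ * x) * t ^ x := by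
      have : (0:ℝ) < 1 + L := by linarith
      positivity
    rw [Real.norm_eq_abs, Real.norm_eq_abs, abs_of_pos (by positivity : (0:ℝ) < Real.exp (-1 * x)),
      abs_of_pos (div_pos hpos hΓpos), one_mul, div_le_iff₀ hΓpos]
    calc (1 + L) * x ^ (θ * x) * t ^ x ≤ Real.exp (-(1 * x)) * Real.Gamma (x + 1) := hfx
      _ = Real.exp (-1 * x) * Real.Gamma (x + 1) := by ring_nf
end

section
/- For every real t > 0, the function x ↦ (1 + log x)·x^x·t^x / Γ(x + 1) is Lebesgue integrable on (1, ∞) if and only if t < e^{−1}, where Γ denotes the real Gamma function and x^x, t^x denote real powers. -/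
open MeasureTheory Real Set

lemma key_pt {x u : ℝ} (hx : 0 < x) (hu : 0 < u) :
    Real.exp (-u) * u ^ x ≤ x ^ x * Real.exp (-x) := by
  rw [Real.rpow_def_of_pos hu, Real.rpow_def_of_pos hx, ← Real.exp_add, ← Real.exp_add]
  apply Real.exp_le_exp.mpr
  have h1 := Real.log_le_sub_one_of_pos (div_pos hu hx)
  rw [Real.log_div hu.ne' hx.ne'] at h1
  have h2 : (u / x - 1) * x = u - x := by field_simp
  nlinarith [mul_le_mul_of_nonneg_right h1 hx.le]

lemma gamma_lower {x : ℝ} (hx : 1 ≤ x) :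
    x ^ x * Real.exp (-(x + 1)) ≤ Real.Gamma (x + 1) := by
  have hx0 : (0:ℝ) < x := lt_of_lt_of_le one_pos hx
  have hint : IntegrableOn (fun u : ℝ => Real.exp (-u) * u ^ x) (Ioi 0) := by
    simpa using Real.GammaIntegral_convergent (s := x + 1) (by linarith)
  rw [Real.Gamma_eq_integral (by linarith : (0:ℝ) < x + 1)]
  simp only [add_sub_cancel_right]
  have h1 : x ^ x * Real.exp (-(x + 1))
      ≤ ∫ u in Ioc x (x + 1), Real.exp (-u) * u ^ x := by
    have hconst : (∫ _u in Ioc x (x + 1), Real.exp (-(x+1)) * x ^ x)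
        = Real.exp (-(x+1)) * x ^ x := by
      rw [setIntegral_const, Real.volume_real_Ioc]
      norm_num
    rw [mul_comm (x ^ x), ← hconst]
    apply setIntegral_mono_on
    · exact integrableOn_const (by rw [Real.volume_Ioc]; exact ENNReal.ofReal_ne_top)
    · exact hint.mono_set (fun u hu => lt_trans hx0 hu.1)
    · exact measurableSet_Ioc
    · intro u hu
      apply mul_le_mul
      · exact Real.exp_le_exp.mpr (by linarith [hu.2])
      · exact Real.rpow_le_rpow hx0.le hu.1.le hx0.le
      · exact Real.rpow_nonneg hx0.le x
      · exact (Real.exp_pos _).le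
  refine h1.trans (setIntegral_mono_set hint ?_ ?_)
  · filter_upwards [ae_restrict_mem measurableSet_Ioi] with u hu
    exact mul_nonneg (Real.exp_pos _).le (Real.rpow_nonneg (le_of_lt hu) x)
  · exact HasSubset.Subset.eventuallyLE (fun u hu => lt_trans hx0 hu.1)

lemma gamma_upper {x : ℝ} (hx : 1 ≤ x) :
    Real.Gamma (x + 1) ≤ 4 * x * (x ^ x * Real.exp (-x)) := by
  have hx0 : (0:ℝ) < x := lt_of_lt_of_le one_pos hx
  have hint : IntegrableOn (fun u : ℝ => Real.exp (-u) * u ^ x) (Ioi 0) := by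
    simpa using Real.GammaIntegral_convergent (s := x + 1) (by linarith)
  rw [Real.Gamma_eq_integral (by linarith : (0:ℝ) < x + 1)]
  simp only [add_sub_cancel_right]
  have hsplit : (Ioc (0:ℝ) (2*x)) ∪ (Ioi (2*x)) = Ioi 0 :=
    Ioc_union_Ioi_eq_Ioi (by linarith)
  rw [← hsplit, setIntegral_union (Ioc_disjoint_Ioi le_rfl) measurableSet_Ioi
    (hint.mono_set (by rw [← hsplit]; exact subset_union_left))
    (hint.mono_set (by rw [← hsplit]; exact subset_union_right))]
  have hI1 : (∫ u in Ioc (0:ℝ) (2*x), Real.exp (-u) * u ^ x)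
      ≤ 2 * x * (x ^ x * Real.exp (-x)) := by
    have hconst : (∫ _u in Ioc (0:ℝ) (2*x), x ^ x * Real.exp (-x))
        = 2 * x * (x ^ x * Real.exp (-x)) := by
      rw [setIntegral_const, Real.volume_real_Ioc_of_le (by linarith), sub_zero,
        smul_eq_mul]
    rw [← hconst]
    apply setIntegral_mono_on
    · exact hint.mono_set (fun u hu => hu.1)
    · exact integrableOn_const (by rw [Real.volume_Ioc]; exact ENNReal.ofReal_ne_top)
    · exact measurableSet_Ioc
    · exact fun u hu => key_pt hx0 hu.1
  have hI2 : (∫ u in Ioi (2*x), Real.exp (-u) * u ^ x)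
      ≤ 2 * x * (x ^ x * Real.exp (-x)) := by
    have hpt : ∀ u ∈ Ioi (2*x), Real.exp (-u) * u ^ x
        ≤ (2:ℝ) ^ x * (x ^ x * Real.exp (-x)) * Real.exp (-(2⁻¹ * u)) := by
      intro u hu
      have hu0 : (0:ℝ) < u := lt_trans (by linarith) hu
      have h1 : Real.exp (-u) = Real.exp (-(2⁻¹*u)) * Real.exp (-(2⁻¹*u)) := by
        rw [← Real.exp_add]; ring_nf
      have h2 : u ^ x = (2:ℝ) ^ x * (2⁻¹*u) ^ x := by
        rw [← Real.mul_rpow (by norm_num) (by positivity)]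
        congr 1; ring
      have h3 : Real.exp (-(2⁻¹*u)) * (2⁻¹*u) ^ x ≤ x ^ x * Real.exp (-x) :=
        key_pt hx0 (by positivity)
      calc Real.exp (-u) * u ^ x
          = (2:ℝ) ^ x * (Real.exp (-(2⁻¹*u)) * (2⁻¹*u) ^ x) * Real.exp (-(2⁻¹ * u)) := by
            rw [h1, h2]; ring
        _ ≤ (2:ℝ) ^ x * (x ^ x * Real.exp (-x)) * Real.exp (-(2⁻¹ * u)) := by
            apply mul_le_mul_of_nonneg_right _ (Real.exp_pos _).le
            exact mul_le_mul_of_nonneg_left h3 (Real.rpow_nonneg (by norm_num) x)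
    have hintc : IntegrableOn
        (fun u : ℝ => (2:ℝ) ^ x * (x ^ x * Real.exp (-x)) * Real.exp (-(2⁻¹ * u)))
        (Ioi (2*x)) := by
      have := (exp_neg_integrableOn_Ioi (2*x) (b := 2⁻¹) (by norm_num)).const_mul
        ((2:ℝ) ^ x * (x ^ x * Real.exp (-x)))
      simp only [neg_mul] at this; exact this
    have hIle : (∫ u in Ioi (2*x), Real.exp (-u) * u ^ x)
        ≤ ∫ u in Ioi (2*x), (2:ℝ) ^ x * (x ^ x * Real.exp (-x)) * Real.exp (-(2⁻¹ * u)) :=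
      setIntegral_mono_on
        (hint.mono_set (fun u hu => lt_trans (by linarith : (0:ℝ) < 2*x) hu))
        hintc measurableSet_Ioi hpt
    have hval : (∫ u in Ioi (2*x), (2:ℝ) ^ x * (x ^ x * Real.exp (-x)) * Real.exp (-(2⁻¹ * u)))
        = (2:ℝ) ^ x * (x ^ x * Real.exp (-x)) * (2 * Real.exp (-x)) := by
      rw [integral_const_mul]
      have : (∫ u in Ioi (2*x), Real.exp (-(2⁻¹ * u)))
          = (2⁻¹:ℝ)⁻¹ • ∫ u in Ioi ((2⁻¹:ℝ) * (2*x)), Real.exp (-u) :=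
        integral_comp_mul_left_Ioi (fun u => Real.exp (-u)) (2*x) (by norm_num)
      rw [this]
      have hx' : (2⁻¹:ℝ) * (2*x) = x := by ring
      rw [hx', integral_exp_neg_Ioi, smul_eq_mul]
      norm_num
    have h2e : (2:ℝ) ^ x * Real.exp (-x) ≤ 1 := by
      rw [Real.rpow_def_of_pos (by norm_num : (0:ℝ) < 2), ← Real.exp_add, ← Real.exp_zero]
      apply Real.exp_le_exp.mpr
      have hlog2 : Real.log 2 < 1 := by
        have := Real.log_two_lt_d9; linarith
      nlinarith
    have hfin : (2:ℝ) ^ x * (x ^ x * Real.exp (-x)) * (2 * Real.exp (-x))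
        ≤ 2 * x * (x ^ x * Real.exp (-x)) := by
      have hxx : (0:ℝ) ≤ x ^ x * Real.exp (-x) :=
        mul_nonneg (Real.rpow_nonneg hx0.le x) (Real.exp_pos _).le
      have A : (2:ℝ) ^ x * Real.exp (-x) * (x ^ x * Real.exp (-x))
          ≤ 1 * (x ^ x * Real.exp (-x)) := mul_le_mul_of_nonneg_right h2e hxx
      nlinarith [A, hxx]
    linarith [hIle, hval ▸ hIle]
  linarith

lemma f_contOn (t : ℝ) (ht : 0 < t) :
    ContinuousOn (fun x : ℝ => (1 + Real.log x) * x ^ x * t ^ x / Real.Gamma (x + 1))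
      (Ioi 1) := by
  intro x hx
  have hx1 : (1:ℝ) < x := hx
  have hx0 : (0:ℝ) < x := by linarith
  apply ContinuousAt.continuousWithinAt
  apply ContinuousAt.div
  · apply ContinuousAt.mul
    · apply ContinuousAt.mul
      · exact continuousAt_const.add (Real.continuousAt_log hx0.ne')
      · exact continuousAt_id.rpow continuousAt_id (Or.inl hx0.ne')
    · exact continuousAt_const.rpow continuousAt_id (Or.inl ht.ne')
  · have hne : ∀ m : ℕ, x + 1 ≠ -m := by
      intro m h
      have h1 : (0:ℝ) < x + 1 := by linarith
      have h2 : (-m:ℝ) ≤ 0 := neg_nonpos.mpr m.cast_nonneg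
      rw [h] at h1
      linarith
    have haux : ContinuousAt (fun y : ℝ => y + 1) x := continuousAt_id.add continuousAt_const
    exact ContinuousAt.comp (g := Real.Gamma) (f := fun y : ℝ => y + 1) (Real.differentiableAt_Gamma hne).continuousAt haux
  · exact (Real.Gamma_pos_of_pos (by linarith : (0:ℝ) < x + 1)).ne'

theorem inverse_gamma_hyperexp_phase_transition (t : ℝ) (ht : 0 < t) :
    IntegrableOn
      (fun x : ℝ => (1 + Real.log x) * x ^ x * t ^ x / Real.Gamma (x + 1))
      (Set.Ioi (1 : ℝ))
      ↔ t < Real.exp (-1) := by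
  constructor
  · intro hint
    by_contra hte
    push_neg at hte
    have hnot : ¬ IntegrableOn (fun x : ℝ => x⁻¹) (Ioi 1) := by
      intro h
      have h' : IntegrableOn (fun x : ℝ => x ^ (-1:ℝ)) (Ioi 1) := by
        apply h.congr_fun _ measurableSet_Ioi
        intro x hx
        show x⁻¹ = x ^ (-1:ℝ)
        rw [Real.rpow_neg_one]
      rw [integrableOn_Ioi_rpow_iff one_pos] at h'
      norm_num at h'
    apply hnot
    refine (hint.const_mul 4).mono' measurable_inv.aestronglyMeasurable ?_
    filter_upwards [ae_restrict_mem measurableSet_Ioi] with x hx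
    have hx1 : (1:ℝ) < x := hx
    have hx0 : (0:ℝ) < x := by linarith
    have hG : 0 < Real.Gamma (x + 1) := Real.Gamma_pos_of_pos (by linarith)
    rw [Real.norm_eq_abs, abs_of_nonneg (inv_nonneg.mpr hx0.le)]
    rw [mul_div_assoc' 4, le_div_iff₀ hG]
    have hGu := gamma_upper hx1.le
    have h1 : x⁻¹ * Real.Gamma (x + 1) ≤ x⁻¹ * (4 * x * (x ^ x * Real.exp (-x))) :=
      mul_le_mul_of_nonneg_left hGu (inv_nonneg.mpr hx0.le)
    have h2 : x⁻¹ * (4 * x * (x ^ x * Real.exp (-x))) = 4 * (x ^ x * Real.exp (-x)) := by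
      field_simp
    have h3 : Real.exp (-x) ≤ t ^ x := by
      have := Real.rpow_le_rpow (Real.exp_pos (-1)).le hte hx0.le
      rwa [Real.rpow_def_of_pos (Real.exp_pos _), Real.log_exp,
        neg_one_mul] at this
    have h4 : (1:ℝ) ≤ 1 + Real.log x := by linarith [Real.log_nonneg hx1.le]
    have h5 : x ^ x * Real.exp (-x) ≤ (1 + Real.log x) * x ^ x * t ^ x := by
      have hxx : (0:ℝ) ≤ x ^ x := Real.rpow_nonneg hx0.le x
      nlinarith [mul_le_mul_of_nonneg_left h3 hxx, Real.exp_pos (-x),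
        mul_nonneg hxx (Real.exp_pos (-x)).le]
    linarith
  · intro hlt
    set c := -(1 + Real.log t) with hc
    have hlogt : Real.log t < -1 := by
      have := Real.log_lt_log ht hlt
      rwa [Real.log_exp] at this
    have hc0 : 0 < c := by rw [hc]; linarith
    have hlt' : Real.log t = -c - 1 := by rw [hc]; ring
    refine Integrable.mono'
      ((exp_neg_integrableOn_Ioi 1 (half_pos hc0)).const_mul (2 * Real.exp 1 / c))
      ((f_contOn t ht).aestronglyMeasurable measurableSet_Ioi) ?_
    filter_upwards [ae_restrict_mem measurableSet_Ioi] with x hx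
    have hx1 : (1:ℝ) < x := hx
    have hx0 : (0:ℝ) < x := by linarith
    have hG : 0 < Real.Gamma (x + 1) := Real.Gamma_pos_of_pos (by linarith)
    have hxx : (0:ℝ) ≤ x ^ x := Real.rpow_nonneg hx0.le x
    have htx : (0:ℝ) ≤ t ^ x := Real.rpow_nonneg ht.le x
    have hf0 : 0 ≤ (1 + Real.log x) * x ^ x * t ^ x / Real.Gamma (x + 1) := by
      apply div_nonneg _ hG.le
      have := Real.log_nonneg hx1.le
      positivity
    rw [Real.norm_eq_abs, abs_of_nonneg hf0, div_le_iff₀ hG]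
    have e1 : 1 + Real.log x ≤ x := by
      linarith [Real.log_le_sub_one_of_pos hx0]
    have e2 : x ≤ 2 / c * Real.exp (c / 2 * x) := by
      have h := Real.add_one_le_exp (c / 2 * x)
      have h2 := mul_le_mul_of_nonneg_left h (by positivity : (0:ℝ) ≤ 2 / c)
      have h4 : 2 / c * (c / 2 * x + 1) = x + 2 / c := by
        field_simp
      have h5 : (0:ℝ) < 2 / c := by positivity
      linarith
    have core : (1 + Real.log x) * t ^ x
        ≤ 2 * Real.exp 1 / c * Real.exp (-(c / 2) * x) * Real.exp (-(x + 1)) := by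
      have tx : t ^ x = Real.exp (Real.log t * x) := Real.rpow_def_of_pos ht x
      calc (1 + Real.log x) * t ^ x
          ≤ x * t ^ x := mul_le_mul_of_nonneg_right e1 htx
        _ ≤ (2 / c * Real.exp (c / 2 * x)) * t ^ x := mul_le_mul_of_nonneg_right e2 htx
        _ = 2 / c * Real.exp (c / 2 * x + (-c - 1) * x) := by
            rw [tx, hlt', mul_assoc, ← Real.exp_add]
        _ = 2 * Real.exp 1 / c * Real.exp (-(c / 2) * x) * Real.exp (-(x + 1)) := by
            rw [show (2:ℝ) * Real.exp 1 / c = 2 / c * Real.exp 1 by ring,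
              mul_assoc, mul_assoc, ← Real.exp_add, ← Real.exp_add]
            congr 1
            ring
    calc (1 + Real.log x) * x ^ x * t ^ x
        = ((1 + Real.log x) * t ^ x) * x ^ x := by ring
      _ ≤ (2 * Real.exp 1 / c * Real.exp (-(c / 2) * x) * Real.exp (-(x + 1))) * x ^ x :=
          mul_le_mul_of_nonneg_right core hxx
      _ = (2 * Real.exp 1 / c * Real.exp (-(c / 2) * x)) * (x ^ x * Real.exp (-(x + 1))) := by
          ring
      _ ≤ (2 * Real.exp 1 / c * Real.exp (-(c / 2) * x)) * Real.Gamma (x + 1) :=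
          mul_le_mul_of_nonneg_left (gamma_lower hx1.le) (by positivity)
end

section
/- Let (Ω, ℱ, P) be a probability space, let a, b > 0, and let X, Y : Ω → ℝ be independent random variables such that the law of X is the Gamma distribution with shape a and rate 1 and the law of Y is the Gamma distribution with shape b and rate 1. Then the conditional expectation of X given the σ-algebra generated by X + Y equals (a/(a+b))·(X + Y) almost surely. -/
open MeasureTheory ProbabilityTheory
open Real Set
open scoped ENNReal NNReal

-- beta integrand integrability on (0,s)
theorem betaInt {u v s : ℝ} (hu : 0 < u) (hv : 0 < v) (hs : 0 < s) :
    IntervalIntegrable (fun x : ℝ => x ^ (u-1) * (s-x) ^ (v-1)) volume 0 s := by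
  have h1 : IntervalIntegrable (fun x : ℝ => x ^ (u-1) * (s-x) ^ (v-1)) volume 0 (s/2) := by
    apply IntervalIntegrable.mul_continuousOn
    · exact intervalIntegral.intervalIntegrable_rpow' (by linarith)
    · apply ContinuousOn.rpow_const
      · exact continuousOn_const.sub continuousOn_id
      · intro x hx
        rw [uIcc_of_le (by linarith : (0:ℝ) ≤ s/2)] at hx
        exact Or.inl (by cases hx; intro h; nlinarith [sub_eq_zero.mp h])
  have h2 : IntervalIntegrable (fun x : ℝ => x ^ (u-1) * (s-x) ^ (v-1)) volume (s/2) s := by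
    apply IntervalIntegrable.continuousOn_mul
    · have := (intervalIntegral.intervalIntegrable_rpow' (a := s/2) (b := 0)
        (r := v-1) (by linarith)).comp_sub_left s
      rw [show s - s/2 = s/2 by ring] at this
      simpa using this
    · apply ContinuousOn.rpow_const continuousOn_id
      intro x hx
      rw [uIcc_of_le (by linarith : s/2 ≤ s)] at hx
      exact Or.inl (by simp only [id_eq]; intro h; rw [h] at hx; cases hx; linarith)
  exact h1.trans h2

theorem betaVal {u v s : ℝ} (hu : 0 < u) (hv : 0 < v) (hs : 0 < s) :
    ∫ x in (0:ℝ)..s, x ^ (u-1) * (s-x) ^ (v-1)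
      = s ^ (u+v-1) * (Gamma u * Gamma v / Gamma (u+v)) := by
  have hG : Real.Gamma (u+v) ≠ 0 := (Real.Gamma_pos_of_pos (by linarith)).ne'
  have hbeta : Complex.betaIntegral u v = ((Gamma u * Gamma v / Gamma (u+v) : ℝ) : ℂ) := by
    have h := Complex.Gamma_mul_Gamma_eq_betaIntegral
      (s := (u:ℂ)) (t := (v:ℂ)) (by simpa using hu) (by simpa using hv)
    rw [← Complex.ofReal_add, Complex.Gamma_ofReal, Complex.Gamma_ofReal,
      Complex.Gamma_ofReal] at h
    push_cast
    rw [eq_div_iff (by exact_mod_cast hG), mul_comm, ← h]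
  have hscaled := Complex.betaIntegral_scaled (u:ℂ) (v:ℂ) hs
  rw [hbeta] at hscaled
  have hlhs : (∫ x in (0:ℝ)..s, ((x:ℂ)) ^ ((u:ℂ) - 1) * ((s:ℂ) - x) ^ ((v:ℂ) - 1))
      = ((∫ x in (0:ℝ)..s, x ^ (u-1) * (s-x) ^ (v-1) : ℝ) : ℂ) := by
    rw [← intervalIntegral.integral_ofReal]
    rw [intervalIntegral.integral_of_le hs.le, intervalIntegral.integral_of_le hs.le]
    apply setIntegral_congr_fun measurableSet_Ioc
    intro x hx
    have hx0 : (0:ℝ) ≤ x := hx.1.le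
    have hsx : (0:ℝ) ≤ s - x := by linarith [hx.2]
    push_cast
    rw [Complex.ofReal_cpow hx0, Complex.ofReal_cpow hsx]
    push_cast
    ring
  have hpow : ((s:ℂ)) ^ ((u:ℂ) + v - 1) = ((s ^ (u+v-1) : ℝ) : ℂ) := by
    rw [Complex.ofReal_cpow hs.le]
    push_cast
    ring_nf
  rw [hlhs, hpow, ← Complex.ofReal_mul] at hscaled
  exact_mod_cast hscaled

theorem pdf_conv {u v s : ℝ} (hu : 0 < u) (hv : 0 < v) (hs : s ≠ 0) :
    ∫⁻ x, gammaPDF u 1 x * gammaPDF v 1 (s - x) ∂volume = gammaPDF (u+v) 1 s := by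
  rcases lt_or_gt_of_ne hs with hneg | hpos
  · have : ∀ x : ℝ, gammaPDF u 1 x * gammaPDF v 1 (s - x) = 0 := by
      intro x
      rcases lt_or_ge x 0 with h | h
      · rw [gammaPDF_of_neg h, zero_mul]
      · rw [gammaPDF_of_neg (by linarith : s - x < 0), mul_zero]
    simp only [this, lintegral_zero, gammaPDF_of_neg hneg]
  · -- s > 0
    have hGu := Real.Gamma_pos_of_pos hu
    have hGv := Real.Gamma_pos_of_pos hv
    have hGuv := Real.Gamma_pos_of_pos (by linarith : 0 < u + v)
    set c : ℝ := exp (-s) / (Gamma u * Gamma v) with hc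
    have hc0 : 0 ≤ c := by positivity
    have hae : (fun x => gammaPDF u 1 x * gammaPDF v 1 (s - x))
        =ᵐ[volume] (Ioo 0 s).indicator
          (fun x => ENNReal.ofReal (c * (x ^ (u-1) * (s-x) ^ (v-1)))) := by
      have hnull : volume ({0, s} : Set ℝ) = 0 :=
        (Set.Finite.insert 0 (finite_singleton s)).measure_zero _
      rw [Filter.eventuallyEq_iff_exists_mem]
      refine ⟨({0, s} : Set ℝ)ᶜ, by rwa [mem_ae_iff, compl_compl], ?_⟩
      intro x hx
      simp only [mem_compl_iff, mem_insert_iff, mem_singleton_iff, not_or] at hx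
      obtain ⟨hx0, hxs⟩ := hx
      dsimp only
      rcases lt_trichotomy x 0 with h | h | h
      · rw [gammaPDF_of_neg h, zero_mul,
          indicator_of_notMem (by simp [mem_Ioo]; intro; linarith)]
      · exact absurd h hx0
      · rcases lt_trichotomy x s with h2 | h2 | h2
        · rw [indicator_of_mem (mem_Ioo.mpr ⟨h, h2⟩), gammaPDF_of_nonneg h.le,
            gammaPDF_of_nonneg (by linarith : (0:ℝ) ≤ s - x),
            ← ENNReal.ofReal_mul (by positivity)]
          congr 1
          simp only [one_rpow, one_mul, hc]
          have he : exp (-x) * exp (-(s-x)) = exp (-s) := by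
            rw [← Real.exp_add]; ring_nf
          linear_combination (x ^ (u-1) * (s-x) ^ (v-1) / (Gamma u * Gamma v)) * he
        · exact absurd h2 hxs
        · rw [gammaPDF_of_neg (by linarith : s - x < 0), mul_zero,
            indicator_of_notMem (by simp [mem_Ioo]; intro; linarith)]
    rw [lintegral_congr_ae hae, lintegral_indicator measurableSet_Ioo]
    have hint : IntegrableOn (fun x : ℝ => x ^ (u-1) * (s-x) ^ (v-1)) (Ioo 0 s) volume := by
      have := (betaInt hu hv hpos)
      rw [intervalIntegrable_iff, uIoc_of_le hpos.le] at this
      exact this.mono_set Ioo_subset_Ioc_self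
    have hnn : 0 ≤ᵐ[volume.restrict (Ioo 0 s)] fun x : ℝ => x ^ (u-1) * (s-x) ^ (v-1) := by
      filter_upwards [ae_restrict_mem measurableSet_Ioo] with x hx
      have := hx.1.le; have h2 : (0:ℝ) ≤ s - x := by linarith [hx.2]
      positivity
    calc ∫⁻ x in Ioo 0 s, ENNReal.ofReal (c * (x ^ (u-1) * (s-x) ^ (v-1)))
        = ∫⁻ x in Ioo 0 s, ENNReal.ofReal c * ENNReal.ofReal (x ^ (u-1) * (s-x) ^ (v-1)) := by
          apply lintegral_congr; intro x; rw [ENNReal.ofReal_mul hc0]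
      _ = ENNReal.ofReal c * ∫⁻ x in Ioo 0 s, ENNReal.ofReal (x ^ (u-1) * (s-x) ^ (v-1)) := by
          apply lintegral_const_mul
          apply Measurable.ennreal_ofReal
          fun_prop
      _ = ENNReal.ofReal c * ENNReal.ofReal (∫ x in Ioo 0 s, x ^ (u-1) * (s-x) ^ (v-1)) := by
          rw [← ofReal_integral_eq_lintegral_ofReal hint hnn]
      _ = gammaPDF (u+v) 1 s := by
          rw [← integral_Ioc_eq_integral_Ioo, ← intervalIntegral.integral_of_le hpos.le,
            betaVal hu hv hpos, ← ENNReal.ofReal_mul hc0, gammaPDF_of_nonneg hpos.le]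
          congr 1
          rw [one_rpow, hc]
          field_simp

theorem gamma_conv {u v : ℝ} (hu : 0 < u) (hv : 0 < v) :
    Measure.map (fun p : ℝ × ℝ => p.1 + p.2)
      ((gammaMeasure u 1).prod (gammaMeasure v 1)) = gammaMeasure (u+v) 1 := by
  have hpdfu : Measurable (gammaPDF u 1) := (measurable_gammaPDFReal u 1).ennreal_ofReal
  have hpdfv : Measurable (gammaPDF v 1) := (measurable_gammaPDFReal v 1).ennreal_ofReal
  haveI := isProbabilityMeasure_gammaMeasure hu one_pos
  haveI := isProbabilityMeasure_gammaMeasure hv one_pos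
  ext B hB
  rw [Measure.map_apply (f := fun p : ℝ × ℝ => p.1 + p.2) (measurable_fst.add measurable_snd) hB]
  have hpre : MeasurableSet ((fun p : ℝ × ℝ => p.1 + p.2) ⁻¹' B) :=
    (measurable_fst.add measurable_snd) hB
  rw [Measure.prod_apply hpre]
  have step1 : ∀ x : ℝ, (gammaMeasure v 1) (Prod.mk x ⁻¹' ((fun p : ℝ × ℝ => p.1 + p.2) ⁻¹' B))
      = ∫⁻ t, B.indicator 1 t * gammaPDF v 1 (t - x) ∂volume := by
    intro x
    have hset : Prod.mk x ⁻¹' ((fun p : ℝ × ℝ => p.1 + p.2) ⁻¹' B)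
        = (fun y => x + y) ⁻¹' B := rfl
    rw [hset, gammaMeasure, withDensity_apply _ (measurable_const_add x hB),
      ← lintegral_indicator (measurable_const_add x hB)]
    have : ∀ y : ℝ, ((fun y => x + y) ⁻¹' B).indicator (gammaPDF v 1) y
        = (fun t => B.indicator 1 t * gammaPDF v 1 (t - x)) (x + y) := by
      intro y
      simp only [indicator_apply, mem_preimage, Pi.one_apply]
      by_cases h : x + y ∈ B <;> simp [h]
    rw [lintegral_congr this]
    exact lintegral_add_left_eq_self (fun t => B.indicator 1 t * gammaPDF v 1 (t - x)) x
  simp_rw [step1]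
  rw [gammaMeasure, lintegral_withDensity_eq_lintegral_mul volume hpdfu]
  swap
  · apply Measurable.lintegral_prod_right (f := fun x t => B.indicator 1 t * gammaPDF v 1 (t - x))
    exact ((measurable_const.indicator hB).comp measurable_snd).mul
      (hpdfv.comp (measurable_snd.sub measurable_fst))
  have swap := lintegral_lintegral_swap (μ := volume) (ν := volume)
    (f := fun x t => gammaPDF u 1 x * (B.indicator 1 t * gammaPDF v 1 (t - x)))
    (Measurable.aemeasurable (by exact (hpdfu.comp measurable_fst).mul (((measurable_one.indicator hB).comp measurable_snd).mul
      (hpdfv.comp (measurable_snd.sub measurable_fst)))))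
  simp only [Pi.mul_apply] at swap ⊢
  rw [show (fun x => gammaPDF u 1 x * ∫⁻ t, B.indicator 1 t * gammaPDF v 1 (t - x) ∂volume)
      = (fun x => ∫⁻ t, gammaPDF u 1 x * (B.indicator 1 t * gammaPDF v 1 (t - x)) ∂volume) from
    funext fun x => (lintegral_const_mul _ (((measurable_const.indicator hB)).mul
      (hpdfv.comp (measurable_sub_const x)))).symm, swap]
  have inner : ∀ᵐ t ∂(volume : Measure ℝ),
      (∫⁻ x, gammaPDF u 1 x * (B.indicator 1 t * gammaPDF v 1 (t - x)) ∂volume)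
        = B.indicator 1 t * gammaPDF (u+v) 1 t := by
    filter_upwards [compl_mem_ae_iff.mpr (volume_singleton (a := (0:ℝ)))] with t ht
    simp only [mem_compl_iff, mem_singleton_iff] at ht
    calc (∫⁻ x, gammaPDF u 1 x * (B.indicator 1 t * gammaPDF v 1 (t - x)) ∂volume)
        = ∫⁻ x, B.indicator 1 t * (gammaPDF u 1 x * gammaPDF v 1 (t - x)) ∂volume := by
          apply lintegral_congr; intro x; ring
      _ = B.indicator 1 t * ∫⁻ x, gammaPDF u 1 x * gammaPDF v 1 (t - x) ∂volume :=
          lintegral_const_mul _ (hpdfu.mul (hpdfv.comp (measurable_const.sub measurable_id)))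
      _ = B.indicator 1 t * gammaPDF (u+v) 1 t := by rw [pdf_conv hu hv ht]
  rw [lintegral_congr_ae inner]
  have : ∀ t : ℝ, B.indicator 1 t * gammaPDF (u+v) 1 t = B.indicator (gammaPDF (u+v) 1) t := by
    intro t
    by_cases h : t ∈ B
    · simp [Set.indicator_of_mem h]
    · simp [Set.indicator_of_notMem h]
  rw [lintegral_congr this, lintegral_indicator hB, gammaMeasure,
    withDensity_apply _ hB]

theorem pdf_shift {u : ℝ} (hu : 0 < u) (x : ℝ) :
    ENNReal.ofReal x * gammaPDF u 1 x = ENNReal.ofReal u * gammaPDF (u+1) 1 x := by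
  rcases lt_trichotomy x 0 with h | h | h
  · rw [gammaPDF_of_neg h, gammaPDF_of_neg h, mul_zero, mul_zero]
  · subst h
    rw [gammaPDF_of_nonneg le_rfl, gammaPDF_of_nonneg le_rfl]
    have h1 : (0:ℝ) ^ (u + 1 - 1) = 0 := by
      rw [show u + 1 - 1 = u by ring]; exact Real.zero_rpow hu.ne'
    simp [h1, Real.zero_rpow hu.ne']
  · rw [gammaPDF_of_nonneg h.le, gammaPDF_of_nonneg h.le,
      ← ENNReal.ofReal_mul h.le, ← ENNReal.ofReal_mul hu.le]
    congr 1
    have hG : Real.Gamma (u+1) = u * Real.Gamma u := Real.Gamma_add_one hu.ne'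
    have hx : x ^ (u + 1 - 1) = x ^ (u - 1) * x := by
      rw [show u + 1 - 1 = (u - 1) + 1 by ring, Real.rpow_add_one h.ne']
    have hGu : Real.Gamma u ≠ 0 := (Real.Gamma_pos_of_pos hu).ne'
    rw [one_rpow, one_rpow, hx, hG]
    field_simp

theorem moment_shift {u : ℝ} (hu : 0 < u) {φ : ℝ → ℝ≥0∞} (hφ : Measurable φ) :
    ∫⁻ x, ENNReal.ofReal x * φ x ∂(gammaMeasure u 1)
      = ENNReal.ofReal u * ∫⁻ x, φ x ∂(gammaMeasure (u+1) 1) := by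
  have hm1 : Measurable (gammaPDF u 1) := (measurable_gammaPDFReal u 1).ennreal_ofReal
  have hm2 : Measurable (gammaPDF (u+1) 1) := (measurable_gammaPDFReal (u+1) 1).ennreal_ofReal
  rw [gammaMeasure, gammaMeasure,
    lintegral_withDensity_eq_lintegral_mul volume hm1 (g := fun x => ENNReal.ofReal x * φ x) (ENNReal.measurable_ofReal.mul hφ),
    lintegral_withDensity_eq_lintegral_mul volume hm2 hφ]
  simp only [Pi.mul_apply]
  rw [← lintegral_const_mul _ (f := fun a => gammaPDF (u+1) 1 a * φ a) (hm2.mul hφ)]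
  apply lintegral_congr
  intro x
  rw [← mul_assoc, ← mul_assoc, mul_comm (gammaPDF u 1 x) (ENNReal.ofReal x), pdf_shift hu]

theorem gamma_nonneg_ae {u : ℝ} : ∀ᵐ x ∂(gammaMeasure u 1), 0 ≤ x := by
  rw [ae_iff]
  have : {x : ℝ | ¬ 0 ≤ x} = Iio 0 := by
    ext x; simp only [mem_setOf_eq, mem_Iio]; exact not_le
  rw [this, gammaMeasure, withDensity_apply _ measurableSet_Iio]
  exact lintegral_gammaPDF_of_nonpos le_rfl

theorem gamma_integrable {u : ℝ} (hu : 0 < u) :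
    Integrable (fun x => x) (gammaMeasure u 1) := by
  haveI := isProbabilityMeasure_gammaMeasure (by linarith : (0:ℝ) < u + 1) one_pos
  refine ⟨measurable_id.aestronglyMeasurable, ?_⟩
  rw [hasFiniteIntegral_iff_norm]
  have : ∫⁻ x, ENNReal.ofReal ‖x‖ ∂(gammaMeasure u 1)
      = ∫⁻ x, ENNReal.ofReal x * 1 ∂(gammaMeasure u 1) := by
    apply lintegral_congr_ae
    filter_upwards [gamma_nonneg_ae (u := u)] with x hx
    rw [Real.norm_eq_abs, abs_of_nonneg hx, mul_one]
  rw [this, moment_shift hu measurable_const, lintegral_one, measure_univ, mul_one]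
  exact ENNReal.ofReal_lt_top

theorem setLIntegral_fst_gamma {u v : ℝ} (hu : 0 < u) (hv : 0 < v)
    {A : Set (ℝ × ℝ)} (hA : MeasurableSet A) :
    ∫⁻ p in A, ENNReal.ofReal p.1 ∂((gammaMeasure u 1).prod (gammaMeasure v 1))
      = ENNReal.ofReal u * ((gammaMeasure (u+1) 1).prod (gammaMeasure v 1)) A := by
  haveI := isProbabilityMeasure_gammaMeasure hu one_pos
  haveI := isProbabilityMeasure_gammaMeasure hv one_pos
  haveI := isProbabilityMeasure_gammaMeasure (by linarith : (0:ℝ) < u + 1) one_pos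
  rw [← lintegral_indicator hA]
  have h1 : (fun p : ℝ × ℝ => A.indicator (fun p : ℝ × ℝ => ENNReal.ofReal p.1) p)
      = fun p : ℝ × ℝ => ENNReal.ofReal p.1 * A.indicator 1 p := by
    funext p
    by_cases h : p ∈ A
    · simp [Set.indicator_of_mem h]
    · simp [Set.indicator_of_notMem h]
  rw [h1, lintegral_prod_symm (fun p : ℝ × ℝ => ENNReal.ofReal p.1 * A.indicator 1 p) ((measurable_fst.ennreal_ofReal.mul
    (measurable_one.indicator hA)).aemeasurable)]
  have h2 : ∀ y : ℝ, ∫⁻ x, ENNReal.ofReal (x, y).1 * A.indicator 1 (x, y) ∂(gammaMeasure u 1)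
      = ENNReal.ofReal u * ∫⁻ x, A.indicator 1 (x, y) ∂(gammaMeasure (u+1) 1) :=
    fun y => moment_shift hu ((measurable_one.indicator hA).comp measurable_prodMk_right)
  simp only [h2]
  rw [lintegral_const_mul' _ _ ENNReal.ofReal_ne_top,
    ← lintegral_prod_symm _ ((measurable_one.indicator hA).aemeasurable),
    lintegral_indicator_one hA]

theorem setLIntegral_snd_gamma {u v : ℝ} (hu : 0 < u) (hv : 0 < v)
    {A : Set (ℝ × ℝ)} (hA : MeasurableSet A) :
    ∫⁻ p in A, ENNReal.ofReal p.2 ∂((gammaMeasure u 1).prod (gammaMeasure v 1))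
      = ENNReal.ofReal v * ((gammaMeasure u 1).prod (gammaMeasure (v+1) 1)) A := by
  haveI := isProbabilityMeasure_gammaMeasure hu one_pos
  haveI := isProbabilityMeasure_gammaMeasure hv one_pos
  haveI := isProbabilityMeasure_gammaMeasure (by linarith : (0:ℝ) < v + 1) one_pos
  rw [← lintegral_indicator hA]
  have h1 : (fun p : ℝ × ℝ => A.indicator (fun p : ℝ × ℝ => ENNReal.ofReal p.2) p)
      = fun p : ℝ × ℝ => ENNReal.ofReal p.2 * A.indicator 1 p := by
    funext p
    by_cases h : p ∈ A
    · simp [Set.indicator_of_mem h]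
    · simp [Set.indicator_of_notMem h]
  rw [h1, lintegral_prod (fun p : ℝ × ℝ => ENNReal.ofReal p.2 * A.indicator 1 p) ((measurable_snd.ennreal_ofReal.mul
    (measurable_one.indicator hA)).aemeasurable)]
  have h2 : ∀ x : ℝ, ∫⁻ y, ENNReal.ofReal (x, y).2 * A.indicator 1 (x, y) ∂(gammaMeasure v 1)
      = ENNReal.ofReal v * ∫⁻ y, A.indicator 1 (x, y) ∂(gammaMeasure (v+1) 1) :=
    fun x => moment_shift hv ((measurable_one.indicator hA).comp measurable_prodMk_left)
  simp only [h2]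
  rw [lintegral_const_mul' _ _ ENNReal.ofReal_ne_top,
    ← lintegral_prod _ ((measurable_one.indicator hA).aemeasurable),
    lintegral_indicator_one hA]

theorem gamma_conditional_projection
    {Ω : Type*} [MeasurableSpace Ω] (P : Measure Ω) [IsProbabilityMeasure P]
    (a b : ℝ) (ha : 0 < a) (hb : 0 < b)
    (X Y : Ω → ℝ) (hX : Measurable X) (hY : Measurable Y)
    (hindep : IndepFun X Y P)
    (hXlaw : Measure.map X P = gammaMeasure a 1)
    (hYlaw : Measure.map Y P = gammaMeasure b 1) :
    P[X | MeasurableSpace.comap (fun ω => X ω + Y ω) (borel ℝ)]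
      =ᵐ[P] fun ω => (a / (a + b)) * (X ω + Y ω) := by
  haveI hP1 : IsProbabilityMeasure (gammaMeasure (a+b+1) 1) :=
    isProbabilityMeasure_gammaMeasure (by linarith) one_pos
  have hSmeas : Measurable (fun ω => X ω + Y ω) := hX.add hY
  have hborel : borel ℝ = (inferInstance : MeasurableSpace ℝ) :=
    (BorelSpace.measurable_eq (α := ℝ)).symm
  have hm : MeasurableSpace.comap (fun ω => X ω + Y ω) (borel ℝ)
      ≤ (inferInstance : MeasurableSpace Ω) := by
    rw [hborel]; exact hSmeas.comap_le
  haveI : SigmaFinite (P.trim hm) := by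
    haveI := isFiniteMeasure_trim (μ := P) hm
    infer_instance
  -- integrability
  have hXint : Integrable X P := by
    have h := gamma_integrable ha
    rw [← hXlaw] at h
    simpa [Function.comp] using
      (integrable_map_measure aestronglyMeasurable_id hX.aemeasurable).mp h
  have hYint : Integrable Y P := by
    have h := gamma_integrable hb
    rw [← hYlaw] at h
    simpa [Function.comp] using
      (integrable_map_measure aestronglyMeasurable_id hY.aemeasurable).mp h
  have hGint : Integrable (fun ω => (a / (a + b)) * (X ω + Y ω)) P :=
    ((hXint.add hYint).const_mul _)
  -- nonnegativity a.e.
  have hXnn : ∀ᵐ ω ∂P, 0 ≤ X ω := by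
    have h := gamma_nonneg_ae (u := a)
    rw [← hXlaw] at h
    exact (ae_map_iff hX.aemeasurable measurableSet_Ici).mp h
  have hYnn : ∀ᵐ ω ∂P, 0 ≤ Y ω := by
    have h := gamma_nonneg_ae (u := b)
    rw [← hYlaw] at h
    exact (ae_map_iff hY.aemeasurable measurableSet_Ici).mp h
  -- joint law
  have hXY : Measurable (fun ω => (X ω, Y ω)) := hX.prodMk hY
  have hmap : Measure.map (fun ω => (X ω, Y ω)) P
      = (gammaMeasure a 1).prod (gammaMeasure b 1) := by
    rw [← hXlaw, ← hYlaw]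
    exact (indepFun_iff_map_prod_eq_prod_map_map hX.aemeasurable hY.aemeasurable).mp hindep
  -- key lintegral computations
  have keyX : ∀ B : Set ℝ, MeasurableSet B →
      ∫⁻ ω in (fun ω => X ω + Y ω) ⁻¹' B, ENNReal.ofReal (X ω) ∂P
        = ENNReal.ofReal a * gammaMeasure (a+b+1) 1 B := by
    intro B hB
    have hpre : MeasurableSet ((fun p : ℝ × ℝ => p.1 + p.2) ⁻¹' B) :=
      (measurable_fst.add measurable_snd) hB
    have h1 : ∫⁻ p in (fun p : ℝ × ℝ => p.1 + p.2) ⁻¹' B, ENNReal.ofReal p.1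
          ∂(Measure.map (fun ω => (X ω, Y ω)) P)
        = ∫⁻ ω in (fun ω => X ω + Y ω) ⁻¹' B, ENNReal.ofReal (X ω) ∂P :=
      setLIntegral_map hpre measurable_fst.ennreal_ofReal hXY
    rw [← h1, hmap, setLIntegral_fst_gamma ha hb hpre,
      ← Measure.map_apply (f := fun p : ℝ × ℝ => p.1 + p.2) (measurable_fst.add measurable_snd) hB,
      gamma_conv (by linarith : (0:ℝ) < a + 1) hb,
      show a + 1 + b = a + b + 1 by ring]
  have keyY : ∀ B : Set ℝ, MeasurableSet B →
      ∫⁻ ω in (fun ω => X ω + Y ω) ⁻¹' B, ENNReal.ofReal (Y ω) ∂P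
        = ENNReal.ofReal b * gammaMeasure (a+b+1) 1 B := by
    intro B hB
    have hpre : MeasurableSet ((fun p : ℝ × ℝ => p.1 + p.2) ⁻¹' B) :=
      (measurable_fst.add measurable_snd) hB
    have h1 : ∫⁻ p in (fun p : ℝ × ℝ => p.1 + p.2) ⁻¹' B, ENNReal.ofReal p.2
          ∂(Measure.map (fun ω => (X ω, Y ω)) P)
        = ∫⁻ ω in (fun ω => X ω + Y ω) ⁻¹' B, ENNReal.ofReal (Y ω) ∂P :=
      setLIntegral_map hpre measurable_snd.ennreal_ofReal hXY
    rw [← h1, hmap, setLIntegral_snd_gamma ha hb hpre,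
      ← Measure.map_apply (f := fun p : ℝ × ℝ => p.1 + p.2) (measurable_fst.add measurable_snd) hB,
      gamma_conv ha (by linarith : (0:ℝ) < b + 1),
      show a + (b + 1) = a + b + 1 by ring]
  -- Bochner set integrals
  have hsetX : ∀ B : Set ℝ, MeasurableSet B →
      ∫ ω in (fun ω => X ω + Y ω) ⁻¹' B, X ω ∂P
        = a * (gammaMeasure (a+b+1) 1 B).toReal := by
    intro B hB
    rw [integral_eq_lintegral_of_nonneg_ae
      (hXnn.filter_mono (ae_mono Measure.restrict_le_self))
      hX.aestronglyMeasurable.restrict, keyX B hB, ENNReal.toReal_mul,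
      ENNReal.toReal_ofReal ha.le]
  have hsetY : ∀ B : Set ℝ, MeasurableSet B →
      ∫ ω in (fun ω => X ω + Y ω) ⁻¹' B, Y ω ∂P
        = b * (gammaMeasure (a+b+1) 1 B).toReal := by
    intro B hB
    rw [integral_eq_lintegral_of_nonneg_ae
      (hYnn.filter_mono (ae_mono Measure.restrict_le_self))
      hY.aestronglyMeasurable.restrict, keyY B hB, ENNReal.toReal_mul,
      ENNReal.toReal_ofReal hb.le]
  -- measurability of the candidate w.r.t. the sub-σ-algebra
  have hgm : AEStronglyMeasurable[MeasurableSpace.comap (fun ω => X ω + Y ω) (borel ℝ)]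
      (fun ω => (a / (a + b)) * (X ω + Y ω)) P := by
    apply StronglyMeasurable.aestronglyMeasurable
    apply Measurable.stronglyMeasurable
    have hS : @Measurable Ω ℝ
        (MeasurableSpace.comap (fun ω => X ω + Y ω) (borel ℝ)) _
        (fun ω => X ω + Y ω) := by
      intro B hB
      exact ⟨B, hborel ▸ hB, rfl⟩
    exact hS.const_mul _
  refine (ae_eq_condExp_of_forall_setIntegral_eq hm hXint
    (fun s _ _ => hGint.integrableOn) ?_ hgm).symm
  rintro s ⟨B, hBb, rfl⟩ -
  have hB : MeasurableSet B := by rw [hborel] at hBb; exact hBb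
  have hadd : ∫ ω in (fun ω => X ω + Y ω) ⁻¹' B, (a / (a + b)) * (X ω + Y ω) ∂P
      = (a / (a + b)) * ((∫ ω in (fun ω => X ω + Y ω) ⁻¹' B, X ω ∂P)
        + ∫ ω in (fun ω => X ω + Y ω) ⁻¹' B, Y ω ∂P) := by
    rw [integral_const_mul, ← integral_add hXint.integrableOn hYint.integrableOn]
  rw [hadd, hsetX B hB, hsetY B hB]
  set k := (gammaMeasure (a+b+1) 1 B).toReal
  field_simp
end

section
/- Let u : ℕ → ℝ be a sequence with values in [0, 1] whose range is dense in [0, 1], and let h : ℕ → ℝ be a summable sequence with h(n) > 0 for all n. Define F : ℝ → ℝ by F(t) = Σ_{n : u(n) ≤ t} h(n) (the sum of h(n) over all n with u(n) ≤ t), and define G(v) = inf { t ∈ [0, 1] : v < F(t) }. Then G is continuous on the interval [0, S), where S = Σ_n h(n). -/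
open MeasureTheory

theorem generalized_inverse_of_dense_jumps_continuous
    (u : ℕ → ℝ) (hu : ∀ n, u n ∈ Set.Icc (0 : ℝ) 1)
    (hdense : Set.Icc (0 : ℝ) 1 ⊆ closure (Set.range u))
    (h : ℕ → ℝ) (hpos : ∀ n, 0 < h n) (hsum : Summable h)
    (F : ℝ → ℝ) (hF : ∀ t, F t = ∑' n, if u n ≤ t then h n else 0)
    (G : ℝ → ℝ) (hG : ∀ v, G v = sInf {t ∈ Set.Icc (0 : ℝ) 1 | v < F t}) :
    ContinuousOn G (Set.Ico (0 : ℝ) (∑' n, h n)) := by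
  set S : ℝ := ∑' n, h n with hS
  -- summability of truncated sums
  have hsummF : ∀ t, Summable (fun n => if u n ≤ t then h n else 0) := by
    intro t
    apply Summable.of_nonneg_of_le _ _ hsum
    · intro n; split <;> simp [le_of_lt (hpos n)]
    · intro n; split <;> simp [le_of_lt (hpos n)]
  -- F is monotone
  have hFmono : ∀ s t : ℝ, s ≤ t → F s ≤ F t := by
    intro s t hst
    rw [hF, hF]
    apply Summable.tsum_le_tsum _ (hsummF s) (hsummF t)
    intro n
    by_cases hn : u n ≤ s
    · rw [if_pos hn, if_pos (hn.trans hst)]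
    · rw [if_neg hn]; split <;> simp [le_of_lt (hpos _)]
  -- F 1 = S
  have hF1 : F 1 = S := by
    rw [hF]
    exact tsum_congr fun n => if_pos (hu n).2
  -- a jump in (t₂, t₃] gives a gap
  have hstep : ∀ (t₂ t₃ : ℝ) (n : ℕ), t₂ < u n → u n ≤ t₃ → F t₂ + h n ≤ F t₃ := by
    intro t₂ t₃ n h2n hn3
    rw [hF, hF]
    have hsingle : Summable (fun k => if k = n then h n else 0) :=
      (hasSum_ite_eq n (h n)).summable
    have heq : (∑' k, if u k ≤ t₂ then h k else 0) + h n
        = ∑' k, ((if u k ≤ t₂ then h k else 0) + (if k = n then h n else 0)) := by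
      rw [Summable.tsum_add (hsummF t₂) hsingle, tsum_ite_eq]
    rw [heq]
    apply Summable.tsum_le_tsum _ ((hsummF t₂).add hsingle) (hsummF t₃)
    intro k
    by_cases hk : k = n
    · subst hk
      rw [if_neg (not_le.mpr h2n), if_pos rfl, if_pos hn3, zero_add]
    · rw [if_neg hk, add_zero]
      by_cases hk2 : u k ≤ t₂
      · rw [if_pos hk2, if_pos (hk2.trans (h2n.le.trans hn3))]
      · rw [if_neg hk2]; split <;> simp [le_of_lt (hpos _)]
  -- strict monotonicity on [0,1] from density
  have hFstrict : ∀ t₂ t₃ : ℝ, 0 ≤ t₂ → t₂ < t₃ → t₃ ≤ 1 → F t₂ < F t₃ := by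
    intro t₂ t₃ h0 h23 h31
    have hx : (t₂ + t₃) / 2 ∈ Set.Icc (0 : ℝ) 1 := by
      constructor <;> [linarith; linarith]
    have hxcl := hdense hx
    have hopen : IsOpen (Set.Ioo t₂ t₃) := isOpen_Ioo
    have hxmem : (t₂ + t₃) / 2 ∈ Set.Ioo t₂ t₃ := by
      constructor <;> linarith
    obtain ⟨y, hy1, hy2⟩ := (mem_closure_iff.mp hxcl) _ hopen hxmem
    obtain ⟨n, rfl⟩ := hy2
    have := hstep t₂ t₃ n hy1.1 hy1.2.le
    have := hpos n
    linarith
  -- basic facts about the sets A_v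
  have hbdd : ∀ v : ℝ, BddBelow {t ∈ Set.Icc (0 : ℝ) 1 | v < F t} :=
    fun v => ⟨0, fun t ht => ht.1.1⟩
  have hmem1 : ∀ v : ℝ, v < S → (1 : ℝ) ∈ {t ∈ Set.Icc (0 : ℝ) 1 | v < F t} := by
    intro v hv
    exact ⟨⟨zero_le_one, le_refl 1⟩, by rw [hF1]; exact hv⟩
  have hne : ∀ v : ℝ, v < S → Set.Nonempty {t ∈ Set.Icc (0 : ℝ) 1 | v < F t} :=
    fun v hv => ⟨1, hmem1 v hv⟩
  have hG_ub : ∀ v t : ℝ, t ∈ Set.Icc (0 : ℝ) 1 → v < F t → G v ≤ t := by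
    intro v t ht hvt
    rw [hG]
    exact csInf_le (hbdd v) ⟨ht, hvt⟩
  have hG_lb : ∀ v t₂ : ℝ, v < S → F t₂ ≤ v → t₂ ≤ G v := by
    intro v t₂ hv hvt
    rw [hG]
    apply le_csInf (hne v hv)
    intro t ht
    by_contra hlt
    push_neg at hlt
    exact absurd ht.2 (not_lt.mpr ((hFmono t t₂ hlt.le).trans hvt))
  have hG_ge0 : ∀ v : ℝ, v < S → 0 ≤ G v := by
    intro v hv
    rw [hG]
    exact le_csInf (hne v hv) fun t ht => ht.1.1
  have hG_le1 : ∀ v : ℝ, v < S → G v ≤ 1 := by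
    intro v hv
    rw [hG]
    exact csInf_le (hbdd v) (hmem1 v hv)
  -- main continuity argument
  intro v₀ hv₀
  obtain ⟨hv₀0, hv₀S⟩ := hv₀
  rw [Metric.continuousWithinAt_iff]
  intro ε hε
  set t₀ : ℝ := G v₀ with ht₀
  have ht₀0 : 0 ≤ t₀ := hG_ge0 v₀ hv₀S
  have ht₀1 : t₀ ≤ 1 := hG_le1 v₀ hv₀S
  -- right estimate
  have hright : ∃ δr > 0, ∀ v : ℝ, v ∈ Set.Ico (0 : ℝ) S → v < v₀ + δr → G v - G v₀ < ε := by
    by_cases h1 : t₀ < 1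
    · set t₁ : ℝ := min (t₀ + ε / 2) ((t₀ + 1) / 2) with ht₁
      have ht₁gt : t₀ < t₁ := lt_min (by linarith) (by linarith)
      have ht₁le1 : t₁ ≤ 1 := (min_le_right _ _).trans (by linarith)
      have ht₁lt : t₁ < t₀ + ε := (min_le_left _ _).trans_lt (by linarith)
      have ht₁0 : 0 ≤ t₁ := ht₀0.trans ht₁gt.le
      -- v₀ < F t₁
      have hFt₁ : v₀ < F t₁ := by
        have : sInf {t ∈ Set.Icc (0 : ℝ) 1 | v₀ < F t} < t₁ := by rw [← hG]; exact ht₁gt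
        obtain ⟨a, ha, halt⟩ := exists_lt_of_csInf_lt (hne v₀ hv₀S) this
        exact ha.2.trans_le (hFmono a t₁ halt.le)
      refine ⟨F t₁ - v₀, by linarith, fun v hv hvlt => ?_⟩
      have : G v ≤ t₁ := hG_ub v t₁ ⟨ht₁0, ht₁le1⟩ (by linarith)
      linarith
    · push_neg at h1
      have ht₀eq : t₀ = 1 := le_antisymm ht₀1 h1
      exact ⟨1, one_pos, fun v hv _ => by
        have := hG_le1 v hv.2
        rw [← ht₀]; linarith⟩
  -- left estimate
  have hleft : ∃ δl > 0, ∀ v : ℝ, v ∈ Set.Ico (0 : ℝ) S → v₀ - δl < v → G v₀ - G v < ε := by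
    by_cases h0 : 0 < t₀
    · set m : ℝ := min ε t₀ with hm
      have hmpos : 0 < m := lt_min hε h0
      have hmε : m ≤ ε := min_le_left _ _
      have hmt : m ≤ t₀ := min_le_right _ _
      set t₂ : ℝ := t₀ - m / 2 with ht₂
      set t₃ : ℝ := t₀ - m / 3 with ht₃
      have h23 : t₂ < t₃ := by rw [ht₂, ht₃]; linarith
      have ht₂0 : 0 ≤ t₂ := by rw [ht₂]; linarith
      have ht₃lt : t₃ < t₀ := by rw [ht₃]; linarith
      have ht₃1 : t₃ ≤ 1 := ht₃lt.le.trans ht₀1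
      -- F t₃ ≤ v₀ since t₃ < sInf
      have hFt₃ : F t₃ ≤ v₀ := by
        by_contra hc
        push_neg at hc
        have := hG_ub v₀ t₃ ⟨ht₂0.trans h23.le, ht₃1⟩ hc
        rw [← ht₀] at this
        linarith
      have hF23 : F t₂ < F t₃ := hFstrict t₂ t₃ ht₂0 h23 ht₃1
      refine ⟨v₀ - F t₂, by linarith, fun v hv hvgt => ?_⟩
      have : t₂ ≤ G v := hG_lb v t₂ hv.2 (by linarith)
      rw [← ht₀]
      have : t₀ - G v ≤ t₀ - t₂ := by linarith
      rw [ht₂] at this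
      linarith
    · push_neg at h0
      have ht₀eq : t₀ = 0 := le_antisymm h0 ht₀0
      exact ⟨1, one_pos, fun v hv _ => by
        have := hG_ge0 v hv.2
        rw [← ht₀, ht₀eq]; linarith⟩
  obtain ⟨δr, hδr, hr⟩ := hright
  obtain ⟨δl, hδl, hl⟩ := hleft
  refine ⟨min δr δl, lt_min hδr hδl, fun v hv hdist => ?_⟩
  rw [Real.dist_eq] at hdist ⊢
  have h1 : v < v₀ + δr := by
    have := abs_lt.mp hdist
    have := min_le_left δr δl
    linarith [this, (abs_lt.mp hdist).2]
  have h2 : v₀ - δl < v := by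
    have := abs_lt.mp hdist
    have := min_le_right δr δl
    linarith [this, (abs_lt.mp hdist).1]
  rw [abs_lt]
  constructor
  · have := hl v hv h2
    linarith
  · exact hr v hv h1
end
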